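/- arXiv:2107.01485 — 8 statements merged into one kernel-verified Lean document; each statement's English description precedes it below -/
import Mathlib

section
/- Let R ⊆ A be an extension of commutative rings and let F = Σ_{i≥0} f_i x^i ∈ A⟦x⟧ be a formal power series. Then F belongs to A·R⟦x⟧, the additive subgroup of A⟦x⟧ generated by all products a·G with a ∈ A and G ∈ R⟦x⟧, if and only if the coefficients f₀, f₁, f₂, … all lie in some finitely generated R-submodule of A. -/
noncomputable section

/-- Let `R ⊆ A` be an extension of commutative rings. A power series `F ∈ A⟦x⟧` lies in the
additive subgroup `A·R⟦x⟧` generated by products `a • G` with `a ∈ A` and `G ∈ R⟦x⟧` if and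
only if its coefficients all lie in a finitely generated `R`-submodule of `A` (i.e. there are
finitely many elements `v 0, …, v (n-1)` of `A` such that every coefficient of `F` is an
`R`-linear combination of them). -/
theorem mem_smul_subring_powerSeries_iff_finite_rank
    (A : Type) [CommRing A] (R : Subring A) (F : PowerSeries A) :
    F ∈ AddSubgroup.closure
        {H : PowerSeries A | ∃ (a : A) (G : PowerSeries A),
          (∀ i : ℕ, PowerSeries.coeff i G ∈ R) ∧ H = a • G} ↔
      ∃ (n : ℕ) (v : Fin n → A), ∀ i : ℕ, ∃ c : Fin n → A,
        (∀ j, c j ∈ R) ∧ PowerSeries.coeff i F = ∑ j, c j * v j := by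
  constructor
  · intro hF
    induction hF using AddSubgroup.closure_induction with
    | mem H hH =>
      obtain ⟨a, G, hG, rfl⟩ := hH
      refine ⟨1, fun _ => a, fun i => ⟨fun _ => PowerSeries.coeff i G, fun _ => hG i, ?_⟩⟩
      simp [mul_comm]
    | zero =>
      exact ⟨0, Fin.elim0, fun i => ⟨Fin.elim0, fun j => j.elim0, by simp⟩⟩
    | add F₁ F₂ _ _ h₁ h₂ =>
      obtain ⟨n₁, v₁, hv₁⟩ := h₁
      obtain ⟨n₂, v₂, hv₂⟩ := h₂
      refine ⟨n₁ + n₂, Fin.append v₁ v₂, fun i => ?_⟩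
      obtain ⟨c₁, hc₁, he₁⟩ := hv₁ i
      obtain ⟨c₂, hc₂, he₂⟩ := hv₂ i
      refine ⟨Fin.append c₁ c₂, fun j => ?_, ?_⟩
      · refine Fin.addCases (fun j => ?_) (fun j => ?_) j
        · simpa using hc₁ j
        · simpa using hc₂ j
      · rw [map_add, he₁, he₂, Fin.sum_univ_add]
        simp
    | neg F₁ _ h₁ =>
      obtain ⟨n, v, hv⟩ := h₁
      refine ⟨n, v, fun i => ?_⟩
      obtain ⟨c, hc, he⟩ := hv i
      exact ⟨-c, fun j => neg_mem (hc j), by simp [he, Finset.sum_neg_distrib]⟩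
  · rintro ⟨n, v, hv⟩
    choose c hc he using fun i => hv i
    have : F = ∑ j : Fin n, v j • (PowerSeries.mk fun i => c i j) := by
      ext i
      simp only [map_sum, PowerSeries.coeff_smul, PowerSeries.coeff_mk, smul_eq_mul]
      rw [he i]
      exact Finset.sum_congr rfl fun j _ => mul_comm _ _
    rw [this]
    exact AddSubgroup.sum_mem _ fun j _ => AddSubgroup.subset_closure
      ⟨v j, PowerSeries.mk fun i => c i j, fun i => by simpa using hc i j, rfl⟩
end
end

section
/- The quotient abelian group ℤ⟦x,y⟧ / (ℤ⟦x⟧·ℤ⟦y⟧) is torsion free: if F ∈ ℤ⟦x,y⟧ and n ≥ 1 is an integer with n·F ∈ ℤ⟦x⟧·ℤ⟦y⟧, then F ∈ ℤ⟦x⟧·ℤ⟦y⟧. -/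
noncomputable section

/-- `f(x)·g(y)` as an element of `ℤ⟦x,y⟧`, realized as `(ℤ⟦x⟧)⟦y⟧`
(inner variable `x`, outer variable `y`). -/
def prodXY (f g : PowerSeries ℤ) : PowerSeries (PowerSeries ℤ) :=
  PowerSeries.mk fun i => (PowerSeries.coeff i g) • f

/-- The additive subgroup `ℤ⟦x⟧·ℤ⟦y⟧ ⊆ ℤ⟦x,y⟧` of series of finite rank, i.e. finite sums
`Σ f_i(x)·g_i(y)`. -/
def finiteRank : AddSubgroup (PowerSeries (PowerSeries ℤ)) :=
  AddSubgroup.closure {F | ∃ f g : PowerSeries ℤ, F = prodXY f g}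

open PowerSeries in
/-- If `F ∈ finiteRank`, all its coefficients lie in a finitely generated
`ℤ`-submodule of `ℤ⟦x⟧`. -/
lemma finiteRank_forward (F : PowerSeries (PowerSeries ℤ)) (h : F ∈ finiteRank) :
    ∃ S : Submodule ℤ (PowerSeries ℤ), S.FG ∧ ∀ j, coeff j F ∈ S := by
  induction h using AddSubgroup.closure_induction with
  | mem x hx =>
      obtain ⟨f, g, rfl⟩ := hx
      refine ⟨Submodule.span ℤ {f}, ⟨{f}, by simp⟩, fun j => ?_⟩
      rw [prodXY, coeff_mk]
      exact Submodule.mem_span_singleton.mpr ⟨_, rfl⟩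
  | zero => exact ⟨⊥, ⟨∅, by simp⟩, fun j => by simp⟩
  | add x y hx hy ihx ihy =>
      obtain ⟨S, hS, hSc⟩ := ihx
      obtain ⟨T, hT, hTc⟩ := ihy
      exact ⟨S ⊔ T, hS.sup hT, fun j => by
        rw [map_add]
        exact Submodule.add_mem _ (Submodule.mem_sup_left (hSc j))
          (Submodule.mem_sup_right (hTc j))⟩
  | neg x hx ihx =>
      obtain ⟨S, hS, hSc⟩ := ihx
      exact ⟨S, hS, fun j => by rw [map_neg]; exact S.neg_mem (hSc j)⟩

open PowerSeries in
/-- If all coefficients of `F` lie in a finitely generated `ℤ`-submodule of `ℤ⟦x⟧`,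
then `F ∈ finiteRank`. -/
lemma finiteRank_backward (F : PowerSeries (PowerSeries ℤ)) (S : Submodule ℤ (PowerSeries ℤ))
    (hS : S.FG) (hc : ∀ j, coeff j F ∈ S) : F ∈ finiteRank := by
  obtain ⟨s, rfl⟩ := hS
  have hch : ∀ j : ℕ, ∃ c : PowerSeries ℤ → ℤ, ∑ i ∈ s, c i • i = coeff j F :=
    fun j => (Submodule.mem_span_finset.mp (hc j)).imp fun _ h => h.2
  choose c hcspec using hch
  have hF : F = ∑ i ∈ s, prodXY i (PowerSeries.mk fun j => c j i) := by
    refine PowerSeries.ext fun j => ?_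
    rw [map_sum, ← hcspec j]
    exact Finset.sum_congr rfl fun i _ => by rw [prodXY, coeff_mk, coeff_mk]
  rw [hF]
  exact AddSubgroup.sum_mem _ fun i _ =>
    AddSubgroup.subset_closure ⟨i, PowerSeries.mk fun j => c j i, rfl⟩

/-- The quotient `ℤ⟦x,y⟧ / (ℤ⟦x⟧·ℤ⟦y⟧)` is torsion free: if `n ≥ 1` and
`n·F ∈ ℤ⟦x⟧·ℤ⟦y⟧`, then `F ∈ ℤ⟦x⟧·ℤ⟦y⟧`. -/
theorem quotient_finiteRank_torsionFree (F : PowerSeries (PowerSeries ℤ)) (n : ℕ)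
    (hn : 1 ≤ n) (h : n • F ∈ finiteRank) : F ∈ finiteRank := by
  obtain ⟨S, hS, hSc⟩ := finiteRank_forward _ h
  set φ : PowerSeries ℤ →ₗ[ℤ] PowerSeries ℤ := (n : ℤ) • LinearMap.id with hφ
  have hn0 : ((n : ℤ) : PowerSeries ℤ) ≠ 0 := by
    intro h0
    have : ((n : ℤ) : ℤ) = 0 := by
      have := congrArg PowerSeries.constantCoeff h0
      simpa using this
    omega
  have hinj : Function.Injective φ := by
    intro a b hab
    simp only [hφ, LinearMap.smul_apply, LinearMap.id_apply] at hab
    rw [zsmul_eq_mul, zsmul_eq_mul] at hab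
    exact mul_left_cancel₀ hn0 hab
  set L : Submodule ℤ (PowerSeries ℤ) := S.comap φ with hL
  have hcl : ∀ j, PowerSeries.coeff j F ∈ L := by
    intro j
    have := hSc j
    rw [map_nsmul] at this
    simpa [hL, hφ, Submodule.mem_comap] using this
  have hmaple : Submodule.map φ L ≤ S := Submodule.map_comap_le _ _
  have hmapfg : (Submodule.map φ L).FG := by
    haveI : IsNoetherian ℤ S := isNoetherian_of_fg_of_noetherian S hS
    have heq : Submodule.map S.subtype (Submodule.comap S.subtype (Submodule.map φ L)) =
        Submodule.map φ L := by
      rw [Submodule.map_comap_subtype, inf_eq_right.mpr hmaple]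
    rw [← heq]
    exact (IsNoetherian.noetherian _).map _
  have hLfg : L.FG := Submodule.fg_of_fg_map_injective φ hinj hmapfg
  exact finiteRank_backward F L hLfg hcl
end
end

section
/- Let k ⊆ K be fields, A a commutative K-algebra, and n, d positive integers. Assume α, β ∈ K are nonzero and the elements 1, αβ⁻¹, (αβ⁻¹)², … of K are linearly independent over k. Let H, G ∈ A⟦x⟧ be power series such that the k-rank of H is at most d−1 and the K-rank of G is at most n−1. Then the series F = (β − α·x)·H + G does not have an n,d-sieve. -/
noncomputable section

/-- A power series `F = Σ f_j xʲ ∈ A⟦x⟧` has an `n,d`-sieve (with respect to a field `K` acting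
on `A`) if there is `m ≥ 0` such that `f_{m+ld+i} = 0` for all `0 ≤ l ≤ n`, `1 ≤ i ≤ d−1`, and
the coefficients `f_{m+d}, f_{m+2d}, …, f_{m+nd}` are linearly independent over `K`. -/
def HasSieve (K A : Type) [Field K] [CommRing A] [Algebra K A] (n d : ℕ)
    (F : PowerSeries A) : Prop :=
  ∃ m : ℕ,
    (∀ l : ℕ, l ≤ n → ∀ i : ℕ, 1 ≤ i → i ≤ d - 1 →
      PowerSeries.coeff (R := A) (m + l * d + i) F = 0) ∧
    LinearIndependent K fun l : Fin n => PowerSeries.coeff (R := A) (m + ((l : ℕ) + 1) * d) F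

/-- **Lemma 3.5** (sieve versus rank). Let `k ⊆ K` be fields, `A` a commutative `K`-algebra,
`α, β ∈ K` nonzero with `1, αβ⁻¹, (αβ⁻¹)², …` linearly independent over `k`. If the `k`-rank of
`H ∈ A⟦x⟧` is at most `d−1` and the `K`-rank of `G ∈ A⟦x⟧` is at most `n−1`, then
`F = (β − α·x)·H + G` has no `n,d`-sieve. -/
theorem no_sieve_of_small_rank (k K A : Type) [Field k] [Field K] [Algebra k K]
    [CommRing A] [Algebra K A] [Algebra k A] [IsScalarTower k K A]
    (n d : ℕ) (hn : 0 < n) (hd : 0 < d) (α β : K) (hα : α ≠ 0) (hβ : β ≠ 0)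
    (hind : LinearIndependent k fun j : ℕ => (α * β⁻¹) ^ j)
    (H G : PowerSeries A)
    (hH : Module.rank k
      (Submodule.span k (Set.range fun i : ℕ => PowerSeries.coeff (R := A) i H)) ≤ (d - 1 : ℕ))
    (hG : Module.rank K
      (Submodule.span K (Set.range fun i : ℕ => PowerSeries.coeff (R := A) i G)) ≤ (n - 1 : ℕ)) :
    ¬ HasSieve K A n d
      ((PowerSeries.C (R := A) (algebraMap K A β) - PowerSeries.C (R := A) (algebraMap K A α)
          * PowerSeries.X) * H + G) := by
  set γ : K := α * β⁻¹ with hγdef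
  rintro ⟨m, hzero, hLI⟩
  set V : Submodule k A :=
    Submodule.span k (Set.range fun i : ℕ => PowerSeries.coeff (R := A) i H) with hVdef
  set W : Submodule K A :=
    Submodule.span K (Set.range fun i : ℕ => PowerSeries.coeff (R := A) i G) with hWdef
  have hHV : ∀ j : ℕ, PowerSeries.coeff (R := A) j H ∈ V := fun j =>
    Submodule.subset_span ⟨j, rfl⟩
  have hGW : ∀ j : ℕ, PowerSeries.coeff (R := A) j G ∈ W := fun j =>
    Submodule.subset_span ⟨j, rfl⟩
  -- coefficient formula
  have hcoeff : ∀ j : ℕ,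
      PowerSeries.coeff (R := A) (j + 1)
        ((PowerSeries.C (R := A) (algebraMap K A β) - PowerSeries.C (R := A) (algebraMap K A α)
          * PowerSeries.X) * H + G)
      = β • PowerSeries.coeff (R := A) (j + 1) H - α • PowerSeries.coeff (R := A) j H
          + PowerSeries.coeff (R := A) (j + 1) G := by
    intro j
    rw [map_add, sub_mul, map_sub, PowerSeries.coeff_C_mul, mul_assoc,
      PowerSeries.coeff_C_mul, PowerSeries.coeff_succ_X_mul,
      Algebra.smul_def, Algebra.smul_def]
  -- abbreviation for the block heads
  set u : ℕ → A := fun l => PowerSeries.coeff (R := A) (m + l * d) H with hudef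
  -- Step 1: within each block, `γ^i • u l - h_{m+ld+i} ∈ W`
  have step1 : ∀ l ≤ n, ∀ i ≤ d - 1,
      γ ^ i • u l - PowerSeries.coeff (R := A) (m + l * d + i) H ∈ W := by
    intro l hl i hi
    induction i with
    | zero => simpa [hudef] using W.zero_mem
    | succ i ih =>
      have hi' : i ≤ d - 1 := Nat.le_of_succ_le hi
      have hz := hzero l hl (i + 1) (Nat.le_add_left 1 i) hi
      rw [show m + l * d + (i + 1) = (m + l * d + i) + 1 from rfl, hcoeff] at hz
      -- hz : β • h_{j+1} - α • h_j + g_{j+1} = 0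
      have hrel : PowerSeries.coeff (R := A) (m + l * d + i + 1) H
          = γ • PowerSeries.coeff (R := A) (m + l * d + i) H
            - β⁻¹ • PowerSeries.coeff (R := A) (m + l * d + i + 1) G := by
        have : β • PowerSeries.coeff (R := A) (m + l * d + i + 1) H
            = α • PowerSeries.coeff (R := A) (m + l * d + i) H
              - PowerSeries.coeff (R := A) (m + l * d + i + 1) G := by
          linear_combination (norm := module) hz
        have := congrArg (fun x => β⁻¹ • x) this
        simpa [smul_smul, inv_mul_cancel₀ hβ, smul_sub, hγdef, mul_comm] using this
      have hmem : γ • (γ ^ i • u l - PowerSeries.coeff (R := A) (m + l * d + i) H)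
          + β⁻¹ • PowerSeries.coeff (R := A) (m + l * d + i + 1) G ∈ W :=
        W.add_mem (W.smul_mem γ (ih hi')) (W.smul_mem β⁻¹ (hGW _))
      have heq : γ ^ (i + 1) • u l - PowerSeries.coeff (R := A) (m + l * d + (i + 1)) H
          = γ • (γ ^ i • u l - PowerSeries.coeff (R := A) (m + l * d + i) H)
            + β⁻¹ • PowerSeries.coeff (R := A) (m + l * d + i + 1) G := by
        rw [show m + l * d + (i + 1) = m + l * d + i + 1 from rfl, hrel]
        rw [pow_succ, mul_comm (γ ^ i) γ, mul_smul]
        module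
      rw [heq]; exact hmem
  -- Step 2: every block head lies in W
  have step2 : ∀ l ≤ n, u l ∈ W := by
    intro l hl
    rcases eq_or_lt_of_le (show 1 ≤ d from hd) with hd1 | hd2
    · -- d = 1 : V has rank 0, so H has all coefficients zero
      have hV0 : V = ⊥ := by
        rw [← hd1] at hH
        simpa using (Submodule.rank_eq_zero (R := k) (M := A)).mp (le_antisymm (by simpa using hH) zero_le)
      have : u l ∈ V := hHV _
      rw [hV0, Submodule.mem_bot] at this
      rw [this]; exact W.zero_mem
    · -- d ≥ 2
      have key : W.mkQ (u l) = 0 → u l ∈ W := fun h =>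
        (Submodule.Quotient.mk_eq_zero W).mp (by rwa [Submodule.mkQ_apply] at h)
      apply key
      by_contra hne
      set q : A →ₗ[k] A ⧸ W := W.mkQ.restrictScalars k with hqdef
      set Vq : Submodule k (A ⧸ W) := V.map q with hVqdef
      have hrankVq : Module.rank k Vq ≤ (d - 1 : ℕ) :=
        le_trans (rank_map_le q V) hH
      set ub : A ⧸ W := W.mkQ (u l) with hubdef
      have hub : ub ≠ 0 := hne
      have hvq : ∀ i : Fin d, γ ^ (i : ℕ) • ub = q (PowerSeries.coeff (R := A) (m + l * d + i) H) := by
        intro i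
        have h1 : (i : ℕ) ≤ d - 1 := Nat.le_sub_one_of_lt i.isLt
        have := step1 l hl i h1
        have h0 : W.mkQ (γ ^ (i : ℕ) • u l - PowerSeries.coeff (R := A) (m + l * d + i) H) = 0 := by
          rwa [Submodule.mkQ_apply, Submodule.Quotient.mk_eq_zero]
        rw [map_sub, sub_eq_zero, map_smul] at h0
        exact h0
      have hmemVq : ∀ i : Fin d, γ ^ (i : ℕ) • ub ∈ Vq := by
        intro i
        rw [hvq i]
        exact ⟨_, hHV _, rfl⟩
      have hliq : LinearIndependent k fun i : Fin d => γ ^ (i : ℕ) • ub := by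
        rw [Fintype.linearIndependent_iff]
        intro c hc i
        have hsum : (∑ j : Fin d, c j • γ ^ (j : ℕ)) • ub = 0 := by
          rw [Finset.sum_smul]
          rw [← hc]
          exact Finset.sum_congr rfl fun j _ => (smul_assoc (c j) (γ ^ (j : ℕ)) ub)
        have hK : (∑ j : Fin d, c j • γ ^ (j : ℕ)) = 0 :=
          (smul_eq_zero.mp hsum).resolve_right hub
        have hli' : LinearIndependent k fun j : Fin d => γ ^ (j : ℕ) :=
          hind.comp (fun j : Fin d => (j : ℕ)) Fin.val_injective
        exact Fintype.linearIndependent_iff.mp hli' c hK i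
      -- lift to the submodule Vq
      have hli2 : LinearIndependent k fun i : Fin d => (⟨γ ^ (i : ℕ) • ub, hmemVq i⟩ : Vq) := by
        apply LinearIndependent.of_comp Vq.subtype
        exact hliq
      have hcard := hli2.cardinal_le_rank
      rw [Cardinal.mk_fin] at hcard
      have := hcard.trans hrankVq
      rw [Nat.cast_le] at this
      omega
  -- Step 3: the sieve coefficients lie in W
  have step3 : ∀ l : Fin n,
      PowerSeries.coeff (R := A) (m + ((l : ℕ) + 1) * d)
        ((PowerSeries.C (R := A) (algebraMap K A β) - PowerSeries.C (R := A) (algebraMap K A α)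
          * PowerSeries.X) * H + G) ∈ W := by
    intro l
    have hidx : m + ((l : ℕ) + 1) * d = (m + (l : ℕ) * d + (d - 1)) + 1 := by
      rw [add_mul, one_mul]
      have : 1 ≤ d := hd
      omega
    rw [hidx, hcoeff]
    have h1 : PowerSeries.coeff (R := A) (m + (l : ℕ) * d + (d - 1) + 1) H ∈ W := by
      have : m + (l : ℕ) * d + (d - 1) + 1 = m + ((l : ℕ) + 1) * d := hidx.symm
      rw [this]
      exact step2 ((l : ℕ) + 1) (by omega)
    have h2 : PowerSeries.coeff (R := A) (m + (l : ℕ) * d + (d - 1)) H ∈ W := by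
      have hs := step1 (l : ℕ) (le_of_lt (lt_of_lt_of_le l.isLt (Nat.le_of_lt_succ (Nat.lt_succ_of_le le_rfl)))) (d - 1) le_rfl
      have hu : γ ^ (d - 1) • u (l : ℕ) ∈ W :=
        W.smul_mem _ (step2 (l : ℕ) (le_of_lt (lt_of_lt_of_le l.isLt le_rfl)))
      have := W.sub_mem hu hs
      simpa using this
    exact W.add_mem (W.sub_mem (W.smul_mem β h1) (W.smul_mem α h2)) (hGW _)
  -- Step 4: contradiction with linear independence over K
  set f : Fin n → A := fun l =>
    PowerSeries.coeff (R := A) (m + ((l : ℕ) + 1) * d)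
      ((PowerSeries.C (R := A) (algebraMap K A β) - PowerSeries.C (R := A) (algebraMap K A α)
        * PowerSeries.X) * H + G) with hfdef
  have hli2 : LinearIndependent K fun l : Fin n => (⟨f l, step3 l⟩ : W) := by
    apply LinearIndependent.of_comp W.subtype
    exact hLI
  have hcard := hli2.cardinal_le_rank
  rw [Cardinal.mk_fin] at hcard
  have := hcard.trans hG
  rw [Nat.cast_le] at this
  omega

end
end

section
/- Fix a prime p. Let 𝒜 be a set and for each α ∈ 𝒜 let g_α = Σ_{i∈ℤ} a_{α,i} x^i ∈ 𝔽_p⟮x⟯ be a formal Laurent series. Assume that for every N > 0 and every α ∈ 𝒜 there exists m ∈ ℤ such that a_{α,m} ≠ 0, a_{β,m} = 0 for every β ≠ α, and a_{β,m+i} = 0 for every β ∈ 𝒜 (including β = α) and every integer i with 0 < |i| < N. Then the family (g_α)_{α∈𝒜} is linearly independent over the field 𝔽_p(x). -/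
noncomputable section

open Polynomial HahnSeries

open scoped RatFunc

lemma coeff_algebraMap_monomial_mul {F : Type*} [Field F] (j : ℕ) (a : F)
    (f : LaurentSeries F) (k : ℤ) :
    ((algebraMap (Polynomial F) (LaurentSeries F) (Polynomial.monomial j a)) * f).coeff k
      = a * f.coeff (k - (j : ℤ)) := by
  have h1 : algebraMap (Polynomial F) (LaurentSeries F) (Polynomial.monomial j a)
      = HahnSeries.single (j : ℤ) a := by
    rw [← Polynomial.C_mul_X_pow_eq_monomial, map_mul, map_pow]
    rw [Polynomial.algebraMap_hahnSeries_apply, Polynomial.algebraMap_hahnSeries_apply,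
      Polynomial.coe_C, Polynomial.coe_X, HahnSeries.ofPowerSeries_C, HahnSeries.ofPowerSeries_X,
      HahnSeries.single_pow, one_pow, HahnSeries.C_apply, HahnSeries.single_mul_single,
      zero_add]
    norm_num
  have h2 : k = (k - (j : ℤ)) + (j : ℤ) := by ring
  rw [h1, h2, HahnSeries.coeff_single_mul_add]
  ring_nf

lemma coeff_algebraMap_mul {F : Type*} [Field F] (P : Polynomial F)
    (f : LaurentSeries F) (k : ℤ) :
    ((algebraMap (Polynomial F) (LaurentSeries F) P) * f).coeff k
      = ∑ j ∈ P.support, P.coeff j * f.coeff (k - (j : ℤ)) := by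
  conv_lhs => rw [P.as_sum_support]
  rw [map_sum, Finset.sum_mul]
  rw [show ((∑ i ∈ P.support, (algebraMap (Polynomial F) (LaurentSeries F))
      ((Polynomial.monomial i) (P.coeff i)) * f).coeff k)
    = ∑ i ∈ P.support, ((algebraMap (Polynomial F) (LaurentSeries F))
      ((Polynomial.monomial i) (P.coeff i)) * f).coeff k from
    map_sum (HahnSeries.coeff.addMonoidHom k) _ _]
  exact Finset.sum_congr rfl fun j _ => coeff_algebraMap_monomial_mul j _ f k


/-- **Lemma 3.7.** Fix a prime `p`. Let `(g_α)_{α ∈ 𝒜}` be a family of formal Laurent series over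
`𝔽_p` such that for every `N > 0` and every `α` there is an `m ∈ ℤ` with: the `m`-th coefficient
of `g_α` is nonzero, the `m`-th coefficient of `g_β` vanishes for all `β ≠ α`, and the `(m+i)`-th
coefficient of `g_β` vanishes for every `β` and every `i` with `0 < |i| < N`. Then the family
`(g_α)` is linearly independent over the field of rational functions `𝔽_p(x)`. -/
theorem laurentSeries_linearIndependent_of_separated_supports
    (p : ℕ) [Fact p.Prime] (𝒜 : Type) (g : 𝒜 → LaurentSeries (ZMod p))
    (hsep : ∀ N : ℕ, 0 < N → ∀ α : 𝒜, ∃ m : ℤ,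
      (g α).coeff m ≠ 0 ∧
      (∀ β : 𝒜, β ≠ α → (g β).coeff m = 0) ∧
      (∀ (β : 𝒜) (i : ℤ), 0 < |i| → |i| < N → (g β).coeff (m + i) = 0)) :
    LinearIndependent (RatFunc (ZMod p)) g := by
  rw [← LinearIndependent.iff_fractionRing (Polynomial (ZMod p)) (RatFunc (ZMod p))]
  rw [linearIndependent_iff']
  intro s q hsum α hαs
  by_contra hq
  set N : ℕ := 1 + s.sup (fun β => (q β).natDegree) with hN
  obtain ⟨m, hm1, hm2, hm3⟩ := hsep N (by omega) α
  set d : ℕ := (q α).natDegree with hd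
  have hdN : d < N := by
    have := Finset.le_sup (f := fun β => (q β).natDegree) hαs
    omega
  have hjN : ∀ β ∈ s, ∀ j ∈ (q β).support, j < N := by
    intro β hβ j hj
    have h1 : j ≤ (q β).natDegree := Polynomial.le_natDegree_of_mem_supp j hj
    have h2 := Finset.le_sup (f := fun β => (q β).natDegree) hβ
    omega
  have habs : ∀ j : ℕ, j < N → j ≠ d →
      0 < |(d : ℤ) - j| ∧ |(d : ℤ) - j| < N := by
    intro j h1 h2
    rw [Int.abs_eq_natAbs]
    constructor <;> [skip; skip] <;> omega
  have key : (∑ β ∈ s, q β • g β).coeff (m + d) = 0 := by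
    rw [hsum]; rfl
  rw [show ((∑ β ∈ s, q β • g β).coeff (m + d))
      = ∑ β ∈ s, (q β • g β).coeff (m + d) from
    map_sum (HahnSeries.coeff.addMonoidHom (m + d)) _ _] at key
  have hterm : ∀ β ∈ s, (q β • g β).coeff (m + d)
      = ∑ j ∈ (q β).support, (q β).coeff j * (g β).coeff (m + d - j) := by
    intro β _
    rw [Algebra.smul_def, coeff_algebraMap_mul]
  rw [Finset.sum_congr rfl hterm] at key
  rw [Finset.sum_eq_single_of_mem α hαs] at key
  · rw [Finset.sum_eq_single_of_mem d (Polynomial.natDegree_mem_support_of_nonzero hq)] at key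
    · rw [show m + (d : ℤ) - d = m by ring] at key
      rcases mul_eq_zero.mp key with h | h
      · exact (Polynomial.leadingCoeff_ne_zero.mpr hq) h
      · exact hm1 h
    · intro j hj hjd
      obtain ⟨h1, h2⟩ := habs j (hjN α hαs j hj) hjd
      rw [show m + (d : ℤ) - j = m + ((d : ℤ) - j) by ring, hm3 α _ h1 h2, mul_zero]
  · intro β hβ hβα
    apply Finset.sum_eq_zero
    intro j hj
    by_cases hjd : j = d
    · subst hjd
      rw [show m + (d : ℤ) - d = m by ring, hm2 β hβα, mul_zero]
    · obtain ⟨h1, h2⟩ := habs j (hjN β hβ j hj) hjd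
      rw [show m + (d : ℤ) - j = m + ((d : ℤ) - j) by ring, hm3 β _ h1 h2, mul_zero]
end
end

section
/- Let U, V ∈ ℤ[x] be polynomials such that V has constant term 1 or −1 (so V is invertible in ℤ⟦x⟧) and the power series U·V⁻¹ ∈ ℤ⟦x⟧ is not a constant integer. Then there exists p₀ such that for every prime p ≥ p₀ the reductions α = U mod p and β = V mod p are nonzero elements of 𝔽_p[x] ⊆ 𝔽_p(x) and the elements 1, αβ⁻¹, (αβ⁻¹)², … of 𝔽_p(x) are linearly independent over 𝔽_p. -/
noncomputable section

-- powers of a transcendental element are linearly independent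
theorem aux_li {K A : Type*} [Field K] [CommRing A] [Algebra K A] {t : A}
    (ht : Transcendental K t) : LinearIndependent K fun n : ℕ => t ^ n := by
  have h := (Polynomial.basisMonomials K).linearIndependent
  have hinj := transcendental_iff_injective.mp ht
  have h2 := h.map' (Polynomial.aeval t).toLinearMap (LinearMap.ker_eq_bot.mpr hinj)
  have : (fun n : ℕ => t ^ n) =
      (Polynomial.aeval t).toLinearMap ∘ (Polynomial.basisMonomials K) := by
    funext n
    simp [Polynomial.coe_basisMonomials, ← Polynomial.X_pow_eq_monomial]
  rw [this]
  exact h2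

-- an element of RatFunc K algebraic over K is a constant
theorem aux_const {K : Type*} [Field K] {t : RatFunc K} (ht : IsAlgebraic K t) :
    ∃ a : K, t = algebraMap (Polynomial K) (RatFunc K) (Polynomial.C a) := by
  have hint : IsIntegral K t := ht.isIntegral
  have hint2 : IsIntegral (Polynomial K) t := hint.tower_top
  obtain ⟨f, hf⟩ := IsIntegrallyClosed.isIntegral_iff.mp hint2
  have hfalg : IsAlgebraic K f := by
    rw [← isAlgebraic_algebraMap_iff (IsFractionRing.injective (Polynomial K) (RatFunc K))]
    rw [hf]; exact ht
  have hdeg : f.natDegree = 0 := by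
    by_contra h
    have hf0 : f ≠ 0 := fun h0 => h (by simp [h0])
    exact (f.transcendental h (mem_nonZeroDivisors_of_ne_zero
      (Polynomial.leadingCoeff_ne_zero.mpr hf0))) hfalg
  obtain ⟨a, ha⟩ := Polynomial.natDegree_eq_zero.mp hdeg
  exact ⟨a, by rw [← hf, ha]⟩

/-- **Lemma 3.9.** Let `U, V ∈ ℤ[x]` with `V` invertible in `ℤ⟦x⟧` (constant term `±1`) and
`U·V⁻¹` not a constant integer (i.e. `U ≠ c·V` for every `c ∈ ℤ`). Then there is `p₀` such that
for every prime `p ≥ p₀` the reductions `α = U mod p`, `β = V mod p` are nonzero in `𝔽_p[x]` and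
the powers `1, αβ⁻¹, (αβ⁻¹)², …` are linearly independent over `𝔽_p` in `𝔽_p(x)`. -/
theorem exists_p0_powers_linearIndependent (U V : Polynomial ℤ)
    (hV : V.coeff 0 = 1 ∨ V.coeff 0 = -1)
    (hUV : ∀ c : ℤ, U ≠ Polynomial.C c * V) :
    ∃ p₀ : ℕ, ∀ (p : ℕ) [Fact p.Prime], p₀ ≤ p →
      U.map (Int.castRingHom (ZMod p)) ≠ 0 ∧
      V.map (Int.castRingHom (ZMod p)) ≠ 0 ∧
      LinearIndependent (ZMod p) fun n : ℕ =>
        (algebraMap (Polynomial (ZMod p)) (RatFunc (ZMod p)) (U.map (Int.castRingHom (ZMod p))) *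
          (algebraMap (Polynomial (ZMod p)) (RatFunc (ZMod p))
            (V.map (Int.castRingHom (ZMod p))))⁻¹) ^ n := by
  classical
  have hu : IsUnit ((PowerSeries.constantCoeff) (V : PowerSeries ℤ)) := by
    rw [Polynomial.constantCoeff_coe]
    rcases hV with h | h <;> rw [h]
    · exact isUnit_one
    · exact IsUnit.neg isUnit_one
  set W : PowerSeries ℤ :=
    (U : PowerSeries ℤ) * PowerSeries.invOfUnit (V : PowerSeries ℤ) hu.unit with hW
  have hVinv : (V : PowerSeries ℤ) * PowerSeries.invOfUnit (V : PowerSeries ℤ) hu.unit = 1 :=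
    PowerSeries.mul_invOfUnit _ _ hu.unit_spec.symm
  have hWV : W * (V : PowerSeries ℤ) = (U : PowerSeries ℤ) := by
    rw [hW, mul_assoc, mul_comm _ (V : PowerSeries ℤ), hVinv, mul_one]
  have hWn : ∃ n, n ≠ 0 ∧ PowerSeries.coeff n W ≠ 0 := by
    by_contra h
    push_neg at h
    set c₀ := PowerSeries.coeff 0 W with hc₀
    have hWC : W = PowerSeries.C c₀ := by
      ext k
      cases k with
      | zero => rw [← hc₀, PowerSeries.coeff_C, if_pos rfl]
      | succ k =>
        rw [PowerSeries.coeff_C, if_neg (Nat.succ_ne_zero k), h _ (Nat.succ_ne_zero k)]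
    apply hUV c₀
    rw [← Polynomial.coe_inj, Polynomial.coe_mul, Polynomial.coe_C, ← hWV, hWC]
  obtain ⟨n, hn0, hWne⟩ := hWn
  refine ⟨(PowerSeries.coeff n W).natAbs + 1, fun p hp hpge => ?_⟩
  haveI : Fact p.Prime := hp
  set f := Int.castRingHom (ZMod p) with hf
  set φ := PowerSeries.map f with hφ
  -- coercion commutes with map
  have hcomm : ∀ q : Polynomial ℤ, φ (q : PowerSeries ℤ) = ((q.map f : Polynomial (ZMod p)) : PowerSeries (ZMod p)) := by
    intro q
    ext k
    rw [hφ, PowerSeries.coeff_map, Polynomial.coeff_coe, Polynomial.coeff_coe,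
      Polynomial.coeff_map]
  have hβ0 : (V.map f).coeff 0 ≠ 0 := by
    rw [Polynomial.coeff_map]
    rcases hV with h | h <;> rw [h] <;> simp
  have hβ : V.map f ≠ 0 := fun h => hβ0 (by rw [h]; simp)
  -- key claim
  have key : ∀ c : ZMod p, U.map f ≠ Polynomial.C c * V.map f := by
    intro c hc
    set c' : ℤ := (c.val : ℤ) with hc'
    have hcc : f c' = c := by
      simp [hc', hf, ZMod.natCast_val, ZMod.cast_id]
    have hmap0 : (U - Polynomial.C c' * V).map f = 0 := by
      rw [Polynomial.map_sub, Polynomial.map_mul, Polynomial.map_C, hcc, hc, sub_self]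
    have hφ0 : φ ((U - Polynomial.C c' * V : Polynomial ℤ) : PowerSeries ℤ) = 0 := by
      rw [hcomm, hmap0, Polynomial.coe_zero]
    have hcoe : ((U - Polynomial.C c' * V : Polynomial ℤ) : PowerSeries ℤ) =
        (U : PowerSeries ℤ) - ((Polynomial.C c' : Polynomial ℤ) : PowerSeries ℤ) * (V : PowerSeries ℤ) := by
      push_cast; ring
    rw [hcoe, map_sub, map_mul, sub_eq_zero] at hφ0
    have hCc : φ ((Polynomial.C c' : Polynomial ℤ) : PowerSeries ℤ) = PowerSeries.C c := by
      rw [Polynomial.coe_C, PowerSeries.map_C, hcc]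
    rw [hCc] at hφ0
    -- now φ U = C c * φ V, and φ W * φ V = φ U
    have hWVp : φ W * φ (V : PowerSeries ℤ) = φ (U : PowerSeries ℤ) := by
      rw [← map_mul, hWV]
    have hVne : φ (V : PowerSeries ℤ) ≠ 0 := by
      intro h
      apply hβ0
      have := congrArg (PowerSeries.constantCoeff) h
      rw [hcomm] at this
      rw [Polynomial.constantCoeff_coe, map_zero] at this
      exact this
    have hWc : φ W = PowerSeries.C c := by
      have hz : (φ W - PowerSeries.C c) * φ (V : PowerSeries ℤ) = 0 := by
        rw [sub_mul, hWVp, hφ0, sub_self]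
      rcases mul_eq_zero.mp hz with h | h
      · exact sub_eq_zero.mp h
      · exact absurd h hVne
    have hzero : f (PowerSeries.coeff n W) = 0 := by
      have := congrArg (PowerSeries.coeff n) hWc
      rw [PowerSeries.coeff_map] at this
      rw [this, PowerSeries.coeff_C, if_neg hn0]
    have hdvd : (p : ℤ) ∣ PowerSeries.coeff n W :=
      (ZMod.intCast_zmod_eq_zero_iff_dvd _ _).mp hzero
    have hle : (p : ℤ) ≤ |PowerSeries.coeff n W| :=
      Int.le_of_dvd (abs_pos.mpr hWne) ((dvd_abs _ _).mpr hdvd)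
    rw [Int.abs_eq_natAbs] at hle
    omega
  refine ⟨fun h => key 0 (by rw [h, Polynomial.C_0, zero_mul]), hβ, ?_⟩
  set α := U.map f with hα
  set β := V.map f with hβ'
  set A := algebraMap (Polynomial (ZMod p)) (RatFunc (ZMod p)) with hA
  have hβA : A β ≠ 0 := fun h =>
    hβ (IsFractionRing.injective (Polynomial (ZMod p)) (RatFunc (ZMod p)) (by rw [h, map_zero]))
  have ht : Transcendental (ZMod p) (A α * (A β)⁻¹) := by
    intro halg
    obtain ⟨a, ha⟩ := aux_const halg
    apply key a
    have h2 : A α = A (Polynomial.C a) * A β := by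
      rw [← ha]; field_simp
    rw [← map_mul] at h2
    exact IsFractionRing.injective (Polynomial (ZMod p)) (RatFunc (ZMod p)) h2
  exact aux_li ht
end
end

section
/- There exists a family (g_r)_{r∈ℝ} of formal power series g_r ∈ ℤ⟦x⟧, indexed by the real numbers, such that for every prime p the family of images of the g_r in 𝔽_p⟮x⟯ (obtained by reducing all coefficients modulo p) is linearly independent over the field 𝔽_p(x). -/
noncomputable section

namespace Prop313Aux

open Finset
open scoped Classical

/-- The binary value of the length-`n` prefix of `σ`. -/
def bval (σ : ℕ → Bool) (n : ℕ) : ℕ := ∑ i ∈ (Finset.range n).filter (fun i => σ i), 2 ^ i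

lemma bval_lt (σ : ℕ → Bool) (n : ℕ) : bval σ n < 2 ^ n :=
  Nat.geomSum_lt le_rfl (fun _ hk => Finset.mem_range.mp (Finset.mem_filter.mp hk).1)

lemma bval_ne {σ σ' : ℕ → Bool} {i n : ℕ} (hi : i < n) (hne : σ i ≠ σ' i) :
    bval σ n ≠ bval σ' n := by
  intro h
  have h2 := Finset.geomSum_injective (le_refl 2) h
  have : (i ∈ (Finset.range n).filter (fun i => σ i)) =
      (i ∈ (Finset.range n).filter (fun i => σ' i)) := by rw [h2]
  simp only [Finset.mem_filter, Finset.mem_range, hi, true_and, eq_iff_iff] at this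
  exact hne (Bool.coe_iff_coe.mp this)

/-- The exponent of the `n`-th term of the series attached to `σ`. -/
def E (σ : ℕ → Bool) (n : ℕ) : ℕ := 2 * 4 ^ (n * (n + 1)) + 4 ^ n * bval σ n

lemma E_upper (σ : ℕ → Bool) (n : ℕ) : E σ n < 3 * 4 ^ (n * (n + 1)) := by
  have h : 4 ^ n * bval σ n < 4 ^ (n * (n + 1)) := by
    rcases Nat.eq_zero_or_pos n with rfl | hn
    · simp [bval]
    · calc 4 ^ n * bval σ n < 4 ^ n * 4 ^ n := by
            refine mul_lt_mul_of_pos_left ?_ (by positivity)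
            exact lt_of_lt_of_le (bval_lt σ n) (Nat.pow_le_pow_left (by norm_num) n)
        _ = 4 ^ (n + n) := by rw [pow_add]
        _ ≤ 4 ^ (n * (n + 1)) := Nat.pow_le_pow_right (by norm_num) (by nlinarith)
  unfold E; omega

lemma E_block {m n : ℕ} (h : m < n) (σ σ' : ℕ → Bool) :
    E σ m + 4 ^ (n * (n + 1)) ≤ E σ' n := by
  have h1 : E σ m < 4 ^ (m * (m + 1) + 1) := by
    calc E σ m < 3 * 4 ^ (m * (m + 1)) := E_upper σ m
      _ ≤ 4 * 4 ^ (m * (m + 1)) := by omega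
      _ = 4 ^ (m * (m + 1) + 1) := by ring
  have h2 : m * (m + 1) + 1 ≤ n * (n + 1) := by nlinarith
  have h3 : 4 ^ (m * (m + 1) + 1) ≤ 4 ^ (n * (n + 1)) := Nat.pow_le_pow_right (by norm_num) h2
  have h4 : 2 * 4 ^ (n * (n + 1)) ≤ E σ' n := Nat.le_add_right _ _
  omega

lemma E_sep {σ σ' : ℕ → Bool} {i n : ℕ} (hi : i < n) (hne : σ i ≠ σ' i) :
    E σ n + 4 ^ n ≤ E σ' n ∨ E σ' n + 4 ^ n ≤ E σ n := by
  unfold E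
  have key : ∀ a b : ℕ, a + 1 ≤ b →
      2 * 4 ^ (n * (n + 1)) + 4 ^ n * a + 4 ^ n ≤ 2 * 4 ^ (n * (n + 1)) + 4 ^ n * b := by
    intro a b hab
    have := Nat.mul_le_mul_left (4 ^ n) hab
    rw [Nat.mul_add, Nat.mul_one] at this
    omega
  have hb := bval_ne hi hne
  rcases Nat.lt_or_ge (bval σ n) (bval σ' n) with h | h
  · exact Or.inl (key _ _ h)
  · exact Or.inr (key _ _ (by omega))

lemma block_cases (σ σ₀ : ℕ → Bool) {m n k1 d D : ℕ} (hD : 2 * D < 4 ^ n)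
    (hk1 : k1 ≤ D) (hd : d ≤ D) (hm : m ≠ n) (heq : E σ m + k1 = E σ₀ n + d) : False := by
  rcases Nat.lt_or_ge m n with h | h
  · have h1 := E_block h σ σ₀
    have h2 : 4 ^ n ≤ 4 ^ (n * (n + 1)) :=
      Nat.pow_le_pow_right (by norm_num) (Nat.le_mul_of_pos_right n (by omega))
    omega
  · have h' : n < m := lt_of_le_of_ne h (Ne.symm hm)
    have h1 := E_block h' σ₀ σ
    have h2 : 4 ^ n ≤ 4 ^ (m * (m + 1)) :=
      Nat.pow_le_pow_right (by norm_num) (by nlinarith)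
    omega

lemma same_block_cases (σ σ₀ : ℕ → Bool) {i n k1 d D : ℕ} (hD : 2 * D < 4 ^ n)
    (hk1 : k1 ≤ D) (hd : d ≤ D) (hi : i < n) (hne : σ i ≠ σ₀ i)
    (heq : E σ n + k1 = E σ₀ n + d) : False := by
  rcases E_sep hi hne with h | h <;> omega

variable (F : Type*) [Field F]

/-- The mod-`p` power series attached to `σ`. -/
def GF (σ : ℕ → Bool) : PowerSeries F :=
  PowerSeries.mk fun m => if ∃ n, E σ n = m then 1 else 0

/-- The integral power series attached to `σ`. -/
def G (σ : ℕ → Bool) : PowerSeries ℤ :=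
  PowerSeries.mk fun m => if ∃ n, E σ n = m then 1 else 0

lemma map_G (σ : ℕ → Bool) :
    PowerSeries.map (Int.castRingHom F) (G σ) = GF F σ := by
  ext m
  simp [G, GF, PowerSeries.coeff_map, apply_ite (fun z : ℤ => (z : F))]

/-- The key computation: any polynomial linear relation among the `GF F σ` is trivial. -/
theorem key (s : Finset (ℕ → Bool)) (q : (ℕ → Bool) → Polynomial F)
    (Hsum : ∑ σ ∈ s, (q σ : PowerSeries F) * GF F σ = 0) :
    ∀ σ ∈ s, q σ = 0 := by
  intro σ₀ hσ₀
  by_contra hq0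
  obtain ⟨D, hD⟩ : ∃ D : ℕ, D = s.sup (fun σ => (q σ).natDegree) := ⟨_, rfl⟩
  obtain ⟨d, hdd⟩ : ∃ d : ℕ, d = (q σ₀).natDegree := ⟨_, rfl⟩
  have hd : d ≤ D := by
    rw [hD, hdd]; exact Finset.le_sup (f := fun σ => (q σ).natDegree) hσ₀
  -- choose a level beyond which all relevant sequences have diverged
  obtain ⟨N₀, hN₀⟩ : ∃ N₀ : ℕ, N₀ = (s.erase σ₀).sup
    (fun σ => if h : ∃ i, σ i ≠ σ₀ i then h.choose + 1 else 0) := ⟨_, rfl⟩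
  obtain ⟨n, hn⟩ : ∃ n : ℕ, n = max N₀ (D + 1) := ⟨_, rfl⟩
  have h4 : 2 * D < 4 ^ n := by
    have h1 : D < 2 ^ D := Nat.lt_two_pow_self
    have h2 : (2 : ℕ) ^ (D + 1) ≤ 4 ^ (D + 1) := Nat.pow_le_pow_left (by norm_num) _
    have h3 : (4 : ℕ) ^ (D + 1) ≤ 4 ^ n :=
      Nat.pow_le_pow_right (by norm_num) (by rw [hn]; exact le_max_right _ _)
    have h5 : 2 * D < 2 ^ (D + 1) := by clear hN₀; rw [pow_succ]; omega
    clear hN₀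
    omega
  have hdiff : ∀ σ ∈ s, σ ≠ σ₀ → ∃ i < n, σ i ≠ σ₀ i := by
    intro σ hσ hne
    have hex : ∃ i, σ i ≠ σ₀ i := Function.ne_iff.mp hne
    refine ⟨hex.choose, ?_, hex.choose_spec⟩
    have hle : (if h : ∃ i, σ i ≠ σ₀ i then h.choose + 1 else 0) ≤ N₀ := by
      rw [hN₀]
      exact Finset.le_sup (f := fun σ => if h : ∃ i, σ i ≠ σ₀ i then h.choose + 1 else 0)
        (Finset.mem_erase.mpr ⟨hne, hσ⟩)
    rw [dif_pos hex] at hle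
    have h6 : N₀ ≤ n := by rw [hn]; exact le_max_left _ _
    clear hN₀
    omega
  clear hN₀ hn
  obtain ⟨M, hM⟩ : ∃ M : ℕ, M = E σ₀ n + d := ⟨_, rfl⟩
  have Hc := congrArg (PowerSeries.coeff (R := F) M) Hsum
  rw [map_sum, map_zero] at Hc
  have hterm0 : ∀ σ ∈ s, σ ≠ σ₀ →
      PowerSeries.coeff (R := F) M ((q σ : PowerSeries F) * GF F σ) = 0 := by
    intro σ hσ hne
    rw [PowerSeries.coeff_mul]
    refine Finset.sum_eq_zero ?_
    rintro ⟨k1, k2⟩ hk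
    rw [Finset.HasAntidiagonal.mem_antidiagonal] at hk
    simp only [Polynomial.coeff_coe, GF, PowerSeries.coeff_mk]
    by_cases hq : (q σ).coeff k1 = 0
    · simp [hq]
    by_cases hex : ∃ m, E σ m = k2
    swap
    · simp [if_neg hex]
    exfalso
    have hk1 : k1 ≤ D := le_trans (Polynomial.le_natDegree_of_ne_zero hq)
      (by rw [hD]; exact Finset.le_sup (f := fun σ => (q σ).natDegree) hσ)
    obtain ⟨m, hm⟩ := hex
    obtain ⟨i, hi, hnei⟩ := hdiff σ hσ hne
    rcases eq_or_ne m n with rfl | hmn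
    · exact same_block_cases σ σ₀ h4 hk1 hd hi hnei (by omega)
    · exact block_cases σ σ₀ h4 hk1 hd hmn (by omega)
  have hterm1 : PowerSeries.coeff (R := F) M ((q σ₀ : PowerSeries F) * GF F σ₀) = (q σ₀).coeff d := by
    rw [PowerSeries.coeff_mul]
    rw [Finset.sum_eq_single_of_mem (d, E σ₀ n)
      (Finset.HasAntidiagonal.mem_antidiagonal.mpr (by omega))]
    · simp only [Polynomial.coeff_coe, GF, PowerSeries.coeff_mk]
      rw [if_pos ⟨n, rfl⟩, mul_one]
    · rintro ⟨k1, k2⟩ hk hne'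
      rw [Finset.HasAntidiagonal.mem_antidiagonal] at hk
      simp only [Polynomial.coeff_coe, GF, PowerSeries.coeff_mk]
      by_cases hq : (q σ₀).coeff k1 = 0
      · simp [hq]
      by_cases hex : ∃ m, E σ₀ m = k2
      swap
      · simp [if_neg hex]
      exfalso
      have hk1 : k1 ≤ d := hdd ▸ Polynomial.le_natDegree_of_ne_zero hq
      obtain ⟨m, hm⟩ := hex
      rcases eq_or_ne m n with rfl | hmn
      · apply hne'
        have h1 : k2 = E σ₀ m := hm.symm
        have h2 : k1 = d := by omega
        simp [h1, h2]
      · exact block_cases σ₀ σ₀ h4 (le_trans hk1 hd) hd hmn (by omega)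
  rw [Finset.sum_eq_single_of_mem σ₀ hσ₀ hterm0, hterm1] at Hc
  rw [hdd] at Hc
  exact Polynomial.leadingCoeff_ne_zero.mpr hq0 Hc

/-- Linear independence over `F[X]` of the whole family, inside Laurent series. -/
theorem li : LinearIndependent (Polynomial F)
    (fun σ : ℕ → Bool => (HahnSeries.ofPowerSeries ℤ F) (GF F σ)) := by
  rw [linearIndependent_iff']
  intro s q hsum σ hσ
  refine key F s q ?_ σ hσ
  have hs : ∀ τ : ℕ → Bool, q τ • (HahnSeries.ofPowerSeries ℤ F) (GF F τ) =
      (HahnSeries.ofPowerSeries ℤ F) ((q τ : PowerSeries F) * GF F τ) := by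
    intro τ
    rw [Algebra.smul_def, Polynomial.algebraMap_hahnSeries_apply, ← map_mul]
  simp only [hs] at hsum
  rw [← map_sum] at hsum
  exact HahnSeries.ofPowerSeries_injective (by rw [hsum, map_zero])

end Prop313Aux

open scoped RatFunc

/-- **Proposition 3.13.** There is a family `(g_r)_{r ∈ ℝ}` of integral power series, indexed by
the continuum, whose reductions modulo any prime `p`, viewed in the Laurent series field
`𝔽_p⸨x⸩`, are linearly independent over the rational function field `𝔽_p(x)`. -/
theorem exists_continuum_family_linearIndependent_mod_all_primes :
    ∃ g : ℝ → PowerSeries ℤ, ∀ (p : ℕ) [Fact p.Prime],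
      LinearIndependent (RatFunc (ZMod p)) fun r : ℝ =>
        HahnSeries.ofPowerSeries ℤ (ZMod p)
          (PowerSeries.map (Int.castRingHom (ZMod p)) (g r)) := by
  obtain ⟨emb⟩ : Nonempty (ℝ ↪ (ℕ → Bool)) := by
    rw [← Cardinal.le_def]
    simp [Cardinal.mk_real, ← Cardinal.power_def, Cardinal.mk_bool]
  refine ⟨fun r => Prop313Aux.G (emb r), ?_⟩
  intro p hp
  have hli := (Prop313Aux.li (ZMod p)).comp emb emb.injective
  have hli' : LinearIndependent (Polynomial (ZMod p)) fun r : ℝ =>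
      HahnSeries.ofPowerSeries ℤ (ZMod p)
        (PowerSeries.map (Int.castRingHom (ZMod p)) (Prop313Aux.G (emb r))) := by
    simpa only [Function.comp_def, Prop313Aux.map_G] using hli
  exact (LinearIndependent.iff_fractionRing (Polynomial (ZMod p)) (RatFunc (ZMod p))).mp hli'
end
end

section
/- Let L = C ⋉ ℤ[t,t⁻¹] be the integral lamplighter group and let φ: ℤ[t,t⁻¹] → ℤ⟦x⟧ be the ring homomorphism determined by φ(t) = 1 + x. Then the pronilpotent completion L̂ is isomorphic to the semidirect product C ⋉ ℤ⟦x⟧, where the generator t of C acts on the additive group of ℤ⟦x⟧ by multiplication by 1 + x, via an isomorphism under which the canonical map L → L̂ corresponds to the homomorphism C ⋉ ℤ[t,t⁻¹] → C ⋉ ℤ⟦x⟧ given by the identity on C and by φ on ℤ[t,t⁻¹]. -/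
noncomputable section

open Subgroup

/-- An abelian group `A` is cotorsion if `Ext¹_ℤ(ℚ, A) = 0`. -/
def IsCotorsion (A : Type) [AddCommGroup A] : Prop :=
  Subsingleton (((Ext ℤ (ModuleCat ℤ) 1).obj
    (Opposite.op (ModuleCat.of ℤ ℚ))).obj (ModuleCat.of ℤ A))

variable {Γ Γ' : Type} [Group Γ] [Group Γ']

/-- The subgroup `[U, Γ]` of `U ∩ [Γ, Γ]`, for a normal subgroup `U ≤ Γ`. -/
def hopfRel (U : Subgroup Γ) : Subgroup ↥(U ⊓ commutator Γ) :=
  (⁅U, (⊤ : Subgroup Γ)⁆).subgroupOf (U ⊓ commutator Γ)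

instance hopfRel_normal (U : Subgroup Γ) [U.Normal] : (hopfRel U).Normal :=
  Subgroup.normal_subgroupOf

/-- The Hopf quotient `(U ∩ [Γ,Γ])/[U,Γ]` of a normal subgroup `U ≤ Γ`. -/
def HopfQuot (U : Subgroup Γ) [U.Normal] : Type :=
  ↥(U ⊓ commutator Γ) ⧸ hopfRel U

open scoped commutatorElement in
instance HopfQuot.commGroup (U : Subgroup Γ) [U.Normal] : CommGroup (HopfQuot U) :=
  { (inferInstanceAs (Group (↥(U ⊓ commutator Γ) ⧸ hopfRel U)) :
      Group (↥(U ⊓ commutator Γ) ⧸ hopfRel U)) with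
    mul_comm := by
      intro a b
      obtain ⟨x, rfl⟩ := QuotientGroup.mk_surjective a
      obtain ⟨y, rfl⟩ := QuotientGroup.mk_surjective b
      change ((x : ↥(U ⊓ commutator Γ) ⧸ hopfRel U) * (y : ↥(U ⊓ commutator Γ) ⧸ hopfRel U))
        = (y : ↥(U ⊓ commutator Γ) ⧸ hopfRel U) * (x : ↥(U ⊓ commutator Γ) ⧸ hopfRel U)
      rw [← QuotientGroup.mk_mul, ← QuotientGroup.mk_mul, QuotientGroup.eq]
      rw [hopfRel, Subgroup.mem_subgroupOf]
      have hxy : ((((x * y)⁻¹ * (y * x) : ↥(U ⊓ commutator Γ))) : Γ)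
          = ⁅((y : Γ))⁻¹, ((x : Γ))⁻¹⁆ := by
        push_cast
        rw [commutatorElement_def]
        group
      rw [hxy]
      exact Subgroup.commutator_mem_commutator
        (inv_mem (Subgroup.mem_inf.mp y.2).1) (Subgroup.mem_top _) }

/-- The homomorphism of Hopf quotients induced by a homomorphism `Φ : Γ →* Γ'` with
`Φ(U) ≤ U'`. -/
def hopfMap {U : Subgroup Γ} {U' : Subgroup Γ'} [U.Normal] [U'.Normal]
    (Φ : Γ →* Γ') (h : Subgroup.map Φ U ≤ U') : HopfQuot U →* HopfQuot U' :=
  QuotientGroup.lift (hopfRel U)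
    ((QuotientGroup.mk' (hopfRel U')).comp
      ((Φ.comp (U ⊓ commutator Γ).subtype).codRestrict (U' ⊓ commutator Γ')
        (fun x => by
          refine Subgroup.mem_inf.mpr ⟨h (Subgroup.mem_map_of_mem Φ (Subgroup.mem_inf.mp x.2).1), ?_⟩
          have h1 := Subgroup.mem_map_of_mem Φ (Subgroup.mem_inf.mp x.2).2
          have h2 : Subgroup.map Φ (_root_.commutator Γ) ≤ _root_.commutator Γ' := by
            rw [_root_.commutator_def (G := Γ'), _root_.commutator_def (G := Γ),
              Subgroup.map_commutator]
            exact Subgroup.commutator_mono le_top le_top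
          exact h2 h1)))
    (by
      intro x hx
      have h1 := Subgroup.mem_map_of_mem Φ (Subgroup.mem_subgroupOf.mp hx)
      rw [Subgroup.map_commutator] at h1
      exact MonoidHom.mem_ker.mpr ((QuotientGroup.eq_one_iff _).mpr
        (Subgroup.mem_subgroupOf.mpr (Subgroup.commutator_mono h le_top h1))))

/-- The second integral homology `H₂(G;ℤ)` of a group `G`, defined via the Hopf formula
`H₂(G) = (R ∩ [F,F])/[R,F]` for the canonical free presentation `F = FreeGroup G ↠ G`. -/
def H2 (G : Type) [Group G] : Type :=
  HopfQuot (MonoidHom.ker (FreeGroup.lift (id : G → G)))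

instance (G : Type) [Group G] : CommGroup (H2 G) :=
  inferInstanceAs (CommGroup (HopfQuot (MonoidHom.ker (FreeGroup.lift (id : G → G)))))

/-- Functoriality of `H₂`: the map induced on second homology by a group homomorphism. -/
def H2Map {G H : Type} [Group G] [Group H] (f : G →* H) : H2 G →* H2 H :=
  hopfMap (FreeGroup.map f)
    (by
      have key : (FreeGroup.lift (id : H → H)).comp (FreeGroup.map f)
          = f.comp (FreeGroup.lift (id : G → G)) := by
        apply FreeGroup.ext_hom
        intro a
        simp [FreeGroup.map.of, FreeGroup.lift_apply_of]
      rintro _ ⟨x, hx, rfl⟩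
      rw [SetLike.mem_coe, MonoidHom.mem_ker] at hx
      rw [MonoidHom.mem_ker]
      have : (FreeGroup.lift (id : H → H)) ((FreeGroup.map f) x)
          = f ((FreeGroup.lift (id : G → G)) x) := DFunLike.congr_fun key x
      rw [this, hx, map_one])

/-- The transition map `G/γ_{n+2}(G) → G/γ_{n+1}(G)` (in Mathlib's indexing,
`Subgroup.lowerCentralSeries (⊤ : Subgroup G) n = γ_{n+1}(G)`). -/
def nilpTransition (G : Type) [Group G] (n : ℕ) :
    G ⧸ Subgroup.lowerCentralSeries (⊤ : Subgroup G) (n + 1) →* G ⧸ Subgroup.lowerCentralSeries (⊤ : Subgroup G) n :=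
  QuotientGroup.map _ _ (MonoidHom.id G)
    (fun x hx => Subgroup.lowerCentralSeries_antitone ⊤ (Nat.le_succ n) hx)

/-- The pronilpotent completion `Ĝ = lim_n G/γ_n(G)`, realized as the subgroup of compatible
families in `∏_n G/γ_n(G)`. -/
def PronilpotentCompletion (G : Type) [Group G] :
    Subgroup (∀ n : ℕ, G ⧸ Subgroup.lowerCentralSeries (⊤ : Subgroup G) n) where
  carrier := {x | ∀ n, nilpTransition G n (x (n + 1)) = x n}
  one_mem' := fun n => by rw [Pi.one_apply, Pi.one_apply, map_one]
  mul_mem' := fun ha hb n => by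
    rw [Pi.mul_apply, Pi.mul_apply, map_mul, ha n, hb n]
  inv_mem' := fun ha n => by
    rw [Pi.inv_apply, Pi.inv_apply, map_inv, ha n]

/-- The canonical homomorphism `G → Ĝ`. -/
def toPronilpotentCompletion (G : Type) [Group G] : G →* ↥(PronilpotentCompletion G) :=
  (Pi.monoidHom fun n => QuotientGroup.mk' (Subgroup.lowerCentralSeries (⊤ : Subgroup G) n)).codRestrict _
    (fun g n => by
      show nilpTransition G n (QuotientGroup.mk g) = QuotientGroup.mk g
      rfl)

/-- The homomorphism `Ĝ → Ĥ` of pronilpotent completions induced by `f : G →* H`. -/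
def pronilpotentCompletionMap {G H : Type} [Group G] [Group H] (f : G →* H) :
    ↥(PronilpotentCompletion G) →* ↥(PronilpotentCompletion H) :=
  ((Pi.monoidHom fun n =>
      (QuotientGroup.map (Subgroup.lowerCentralSeries (⊤ : Subgroup G) n) (Subgroup.lowerCentralSeries (⊤ : Subgroup H) n) f
        (fun x hx => lowerCentralSeries.map f n (Subgroup.mem_map_of_mem f hx))).comp
        ((Pi.evalMonoidHom _ n).comp (PronilpotentCompletion G).subtype)).codRestrict _
    (fun x n => by
      have square : ∀ y : G ⧸ Subgroup.lowerCentralSeries (⊤ : Subgroup G) (n + 1),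
          nilpTransition H n
            (QuotientGroup.map (Subgroup.lowerCentralSeries (⊤ : Subgroup G) (n+1)) (Subgroup.lowerCentralSeries (⊤ : Subgroup H) (n+1)) f
              (fun z hz => lowerCentralSeries.map f (n+1) (Subgroup.mem_map_of_mem f hz)) y)
          = QuotientGroup.map (Subgroup.lowerCentralSeries (⊤ : Subgroup G) n) (Subgroup.lowerCentralSeries (⊤ : Subgroup H) n) f
              (fun z hz => lowerCentralSeries.map f n (Subgroup.mem_map_of_mem f hz))
              (nilpTransition G n y) := by
        intro y
        obtain ⟨g, rfl⟩ := QuotientGroup.mk_surjective y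
        rfl
      exact (square (x.1 (n + 1))).trans (congrArg _ (x.2 n))))

noncomputable section

/-- Multiplication by `t` as an additive automorphism of `ℤ[t,t⁻¹]`. -/
def tMul : LaurentPolynomial ℤ ≃+ LaurentPolynomial ℤ :=
  AddEquiv.mk'
    ⟨fun f => LaurentPolynomial.T 1 * f, fun f => LaurentPolynomial.T (-1) * f,
      fun f => by
        show LaurentPolynomial.T (-1) * (LaurentPolynomial.T 1 * f) = f
        rw [← mul_assoc, ← LaurentPolynomial.T_add]
        norm_num,
      fun f => by
        show LaurentPolynomial.T 1 * (LaurentPolynomial.T (-1) * f) = f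
        rw [← mul_assoc, ← LaurentPolynomial.T_add]
        norm_num⟩
    (fun x y => mul_add _ x y)

/-- The integral lamplighter group `L = ℤ ≀ ℤ = C ⋉ ℤ[t,t⁻¹]`, where the generator `t` of the
infinite cyclic group `C` acts by multiplication by `t`. -/
abbrev Lamplighter : Type :=
  SemidirectProduct (Multiplicative (LaurentPolynomial ℤ)) (Multiplicative ℤ)
    (zpowersHom (MulAut (Multiplicative (LaurentPolynomial ℤ)))
      (AddEquiv.toMultiplicative tMul))

/-- The unit `1 + x` of `ℤ⟦x⟧`. -/
def onePlusX : (PowerSeries ℤ)ˣ where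
  val := 1 + PowerSeries.X
  inv := PowerSeries.invOfUnit (1 + PowerSeries.X) 1
  val_inv := PowerSeries.mul_invOfUnit _ _ (by simp)
  inv_val := by
    rw [mul_comm]
    exact PowerSeries.mul_invOfUnit _ _ (by simp)

/-- Multiplication by `1 + x` as an additive automorphism of `ℤ⟦x⟧`. -/
def onePlusXMul : PowerSeries ℤ ≃+ PowerSeries ℤ :=
  AddEquiv.mk'
    ⟨fun f => (1 + PowerSeries.X) * f, fun f => (↑onePlusX⁻¹ : PowerSeries ℤ) * f,
      fun f => by
        show (↑onePlusX⁻¹ : PowerSeries ℤ) * ((1 + PowerSeries.X) * f) = f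
        rw [← mul_assoc]
        have h : (↑onePlusX⁻¹ : PowerSeries ℤ) * (1 + PowerSeries.X) = 1 := by
          rw [mul_comm]; exact onePlusX.val_inv
        rw [h, one_mul],
      fun f => by
        show (1 + PowerSeries.X) * ((↑onePlusX⁻¹ : PowerSeries ℤ) * f) = f
        rw [← mul_assoc]
        have h : (1 + PowerSeries.X) * (↑onePlusX⁻¹ : PowerSeries ℤ) = 1 := onePlusX.val_inv
        rw [h, one_mul]⟩
    (fun x y => mul_add _ x y)

/-- `C ⋉ ℤ⟦x⟧`, where the generator `t` of `C` acts by multiplication by `1 + x`. -/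
abbrev LamplighterCompleted : Type :=
  SemidirectProduct (Multiplicative (PowerSeries ℤ)) (Multiplicative ℤ)
    (zpowersHom (MulAut (Multiplicative (PowerSeries ℤ)))
      (AddEquiv.toMultiplicative onePlusXMul))

namespace LampAux
open LaurentPolynomial

abbrev A := LaurentPolynomial ℤ

/-- The ideal `((t-1)^n)` of `ℤ[t,t⁻¹]`. -/
def J (n : ℕ) : Ideal A := Ideal.span {((T 1 : A) - 1) ^ n}

lemma tau_apply (a : A) :
    (AddEquiv.toMultiplicative tMul) (Multiplicative.ofAdd a)
      = Multiplicative.ofAdd (T 1 * a) := rfl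

lemma tau_symm_apply (a : A) :
    (AddEquiv.toMultiplicative tMul)⁻¹ (Multiplicative.ofAdd a)
      = Multiplicative.ofAdd (T (-1) * a) := rfl

lemma act_apply (m : ℤ) (a : A) :
    Multiplicative.toAdd
      ((zpowersHom (MulAut (Multiplicative A)) (AddEquiv.toMultiplicative tMul))
        (Multiplicative.ofAdd m) (Multiplicative.ofAdd a))
      = T m * a := by
  rw [zpowersHom_apply, toAdd_ofAdd]
  induction m using Int.induction_on generalizing a with
  | zero => simp [T_zero]
  | succ k ih =>
      rw [zpow_add_one, MulAut.mul_apply, tau_apply, ih, ← mul_assoc, ← T_add]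
  | pred k ih =>
      rw [zpow_sub_one, MulAut.mul_apply, tau_symm_apply, ih, ← mul_assoc, ← T_add]
      ring_nf

end LampAux

namespace Lamp2
open LampAux LaurentPolynomial Multiplicative
open scoped commutatorElement

lemma act_apply' (c : Multiplicative ℤ) (u : Multiplicative A) :
    (zpowersHom (MulAut (Multiplicative A)) (AddEquiv.toMultiplicative tMul)) c u
      = Multiplicative.ofAdd (T (Multiplicative.toAdd c) * Multiplicative.toAdd u) := by
  have h := act_apply (toAdd c) (toAdd u)
  simp only [ofAdd_toAdd] at h
  rw [← ofAdd_toAdd ((zpowersHom (MulAut (Multiplicative A)) (AddEquiv.toMultiplicative tMul))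
    c u), h]

lemma comm_formula (a b : A) (m k : ℤ) :
    ⁅(⟨Multiplicative.ofAdd a, Multiplicative.ofAdd m⟩ : Lamplighter),
      (⟨Multiplicative.ofAdd b, Multiplicative.ofAdd k⟩ : Lamplighter)⁆
    = (⟨Multiplicative.ofAdd ((1 - T k) * a + (T m - 1) * b), 1⟩ : Lamplighter) := by
  apply SemidirectProduct.ext
  · simp only [commutatorElement_def, SemidirectProduct.mul_left, SemidirectProduct.inv_left,
      SemidirectProduct.mul_right, SemidirectProduct.inv_right, act_apply', toAdd_mul,
      toAdd_inv, toAdd_ofAdd]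
    simp only [mul_neg, ← mul_assoc, ← T_add, ← ofAdd_add]
    rw [show m + k + -m = k by ring, show k + -k = 0 by ring, T_zero]
    congr 1
    ring
  · simp only [commutatorElement_def, SemidirectProduct.mul_right, SemidirectProduct.inv_right]
    simp only [← ofAdd_neg, ← ofAdd_add]
    rw [show m + k + -m + -k = 0 by ring, ofAdd_zero]



lemma T_sub_one_dvd (k : ℤ) : ((T 1 : A) - 1) ∣ (1 - T k) := by
  induction k using Int.induction_on with
  | zero => simp
  | succ k ih =>
      have h : (1 : A) - T (k + 1) = (1 - T k) - T k * (T 1 - 1) := by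
        rw [mul_sub, ← T_add, mul_one]; ring
      rw [h]
      exact dvd_sub ih (Dvd.intro_left _ rfl)
  | pred k ih =>
      have h : (1 : A) - T (-(k:ℤ) - 1) = (1 - T (-(k:ℤ))) + T (-(k:ℤ) - 1) * (T 1 - 1) := by
        rw [mul_sub, ← T_add, mul_one, show -(k : ℤ) - 1 + 1 = -(k:ℤ) by ring]; ring
      rw [h]
      exact dvd_add ih (Dvd.intro_left _ rfl)

lemma T_sub_one_dvd' (k : ℤ) : ((T 1 : A) - 1) ∣ (T k - 1) := by
  have h := dvd_neg.mpr (T_sub_one_dvd k)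
  rwa [neg_sub] at h

/-- The subgroup `{(a, 0) : a ∈ J n}` of the lamplighter group. -/
def S (n : ℕ) : Subgroup Lamplighter where
  carrier := {g | g.right = 1 ∧ Multiplicative.toAdd g.left ∈ J n}
  one_mem' := ⟨rfl, by simpa using (J n).zero_mem⟩
  mul_mem' := by
    rintro g h ⟨hg1, hg2⟩ ⟨hh1, hh2⟩
    refine ⟨by rw [SemidirectProduct.mul_right, hg1, hh1, mul_one], ?_⟩
    rw [SemidirectProduct.mul_left, hg1, map_one, MulAut.one_apply, toAdd_mul]
    exact (J n).add_mem hg2 hh2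
  inv_mem' := by
    rintro g ⟨hg1, hg2⟩
    refine ⟨by rw [SemidirectProduct.inv_right, hg1, inv_one], ?_⟩
    rw [SemidirectProduct.inv_left, hg1, inv_one, map_one, MulAut.one_apply, toAdd_inv]
    exact (J n).neg_mem hg2

lemma mem_S {n : ℕ} {g : Lamplighter} :
    g ∈ S n ↔ g.right = 1 ∧ Multiplicative.toAdd g.left ∈ J n := Iff.rfl

lemma lcs_eq (n : ℕ) : Subgroup.lowerCentralSeries (⊤ : Subgroup Lamplighter) (n + 1) = S (n + 1) := by
  induction n with
  | zero =>
      rw [show Subgroup.lowerCentralSeries (⊤ : Subgroup Lamplighter) (0 + 1)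
          = ⁅(⊤ : Subgroup Lamplighter), ⊤⁆ from rfl]
      apply le_antisymm
      · rw [Subgroup.commutator_le]
        rintro ⟨gl, gr⟩ - ⟨hl, hr⟩ -
        rw [← ofAdd_toAdd gl, ← ofAdd_toAdd gr, ← ofAdd_toAdd hl, ← ofAdd_toAdd hr,
          comm_formula]
        refine mem_S.mpr ⟨rfl, ?_⟩
        rw [toAdd_ofAdd, J, pow_one, Ideal.mem_span_singleton]
        exact dvd_add ((T_sub_one_dvd _).mul_right _) ((T_sub_one_dvd' _).mul_right _)
      · rintro ⟨gl, gr⟩ ⟨hg1, hg2⟩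
        rw [J, pow_one, Ideal.mem_span_singleton] at hg2
        obtain ⟨q, hq⟩ := hg2
        have hgr : gr = 1 := hg1
        subst hgr
        have key : (⟨gl, 1⟩ : Lamplighter)
            = ⁅(⟨Multiplicative.ofAdd 0, Multiplicative.ofAdd 1⟩ : Lamplighter),
                (⟨Multiplicative.ofAdd q, Multiplicative.ofAdd 0⟩ : Lamplighter)⁆ := by
          rw [comm_formula]
          congr 1
          rw [← ofAdd_toAdd gl, hq]
          congr 1
          rw [T_zero]
          ring
        rw [key]
        exact Subgroup.commutator_mem_commutator (Subgroup.mem_top _) (Subgroup.mem_top _)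
  | succ n ih =>
      rw [show Subgroup.lowerCentralSeries (⊤ : Subgroup Lamplighter) (n + 1 + 1)
          = ⁅Subgroup.lowerCentralSeries (⊤ : Subgroup Lamplighter) (n + 1), ⊤⁆ from rfl, ih]
      apply le_antisymm
      · rw [Subgroup.commutator_le]
        rintro ⟨gl, gr⟩ ⟨hg1, hg2⟩ ⟨hl, hr⟩ -
        have hgr : gr = 1 := hg1
        subst hgr
        rw [J, Ideal.mem_span_singleton] at hg2
        obtain ⟨q, hq⟩ := hg2
        rw [show (1 : Multiplicative ℤ) = Multiplicative.ofAdd 0 from rfl,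
          ← ofAdd_toAdd gl, ← ofAdd_toAdd hl, ← ofAdd_toAdd hr, comm_formula]
        refine mem_S.mpr ⟨rfl, ?_⟩
        rw [toAdd_ofAdd, J, Ideal.mem_span_singleton]
        obtain ⟨c, hc⟩ := T_sub_one_dvd (Multiplicative.toAdd hr)
        rw [hq, hc, T_zero]
        exact ⟨c * q, by ring⟩
      · rintro ⟨gl, gr⟩ ⟨hg1, hg2⟩
        have hgr : gr = 1 := hg1
        subst hgr
        rw [J, Ideal.mem_span_singleton] at hg2
        obtain ⟨q, hq⟩ := hg2
        have key : (⟨gl, 1⟩ : Lamplighter)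
            = ⁅(⟨Multiplicative.ofAdd (-((T 1 - 1) ^ (n + 1) * q)), Multiplicative.ofAdd 0⟩ :
                  Lamplighter),
                (⟨Multiplicative.ofAdd 0, Multiplicative.ofAdd 1⟩ : Lamplighter)⁆ := by
          rw [comm_formula]
          congr 1
          rw [← ofAdd_toAdd gl, hq]
          congr 1
          rw [T_zero]
          ring
        rw [key]
        refine Subgroup.commutator_mem_commutator (mem_S.mpr ⟨rfl, ?_⟩) (Subgroup.mem_top _)
        rw [toAdd_ofAdd, J, Ideal.mem_span_singleton]
        exact ⟨-q, by ring⟩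


open PowerSeries in
/-- Truncation `ℤ⟦x⟧ →+ ℤ[t,t⁻¹]`, `f ↦ ∑_{i<n} fᵢ (t-1)^i`. -/
def tau (n : ℕ) : PowerSeries ℤ →+ A where
  toFun f := ∑ i ∈ Finset.range n, LaurentPolynomial.C (coeff i f) * ((T 1 : A) - 1) ^ i
  map_zero' := by simp
  map_add' f g := by
    simp only [map_add, add_mul, Finset.sum_add_distrib]

lemma J_mono {m n : ℕ} (h : m ≤ n) : J n ≤ J m := by
  rw [J, J, Ideal.span_singleton_le_span_singleton]
  exact pow_dvd_pow _ h

lemma J_zero_eq_top : J 0 = ⊤ := by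
  rw [J, pow_zero, Ideal.span_singleton_one]

lemma tau_succ (n : ℕ) (f : PowerSeries ℤ) :
    tau (n + 1) f = tau n f
      + LaurentPolynomial.C (PowerSeries.coeff n f) * ((T 1 : A) - 1) ^ n :=
  Finset.sum_range_succ _ n

lemma onePlusX_val : ((onePlusX : (PowerSeries ℤ)ˣ) : PowerSeries ℤ) = 1 + PowerSeries.X := rfl

lemma tauP_apply (a : PowerSeries ℤ) :
    (AddEquiv.toMultiplicative onePlusXMul) (Multiplicative.ofAdd a)
      = Multiplicative.ofAdd ((1 + PowerSeries.X) * a) := rfl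

lemma tauP_symm_apply (a : PowerSeries ℤ) :
    (AddEquiv.toMultiplicative onePlusXMul)⁻¹ (Multiplicative.ofAdd a)
      = Multiplicative.ofAdd ((↑onePlusX⁻¹ : PowerSeries ℤ) * a) := rfl

lemma actP_apply (m : ℤ) (a : PowerSeries ℤ) :
    Multiplicative.toAdd
      ((zpowersHom (MulAut (Multiplicative (PowerSeries ℤ)))
          (AddEquiv.toMultiplicative onePlusXMul))
        (Multiplicative.ofAdd m) (Multiplicative.ofAdd a))
      = ((onePlusX ^ m : (PowerSeries ℤ)ˣ) : PowerSeries ℤ) * a := by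
  rw [zpowersHom_apply, toAdd_ofAdd]
  induction m using Int.induction_on generalizing a with
  | zero => simp
  | succ k ih =>
      rw [zpow_add_one, MulAut.mul_apply, tauP_apply, ih, zpow_add_one, Units.val_mul,
        onePlusX_val, mul_assoc]
  | pred k ih =>
      rw [zpow_sub_one, MulAut.mul_apply, tauP_symm_apply, ih, zpow_sub_one, Units.val_mul,
        mul_assoc]

lemma actP_apply' (c : Multiplicative ℤ) (u : Multiplicative (PowerSeries ℤ)) :
    (zpowersHom (MulAut (Multiplicative (PowerSeries ℤ)))
        (AddEquiv.toMultiplicative onePlusXMul)) c u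
      = Multiplicative.ofAdd
          (((onePlusX ^ Multiplicative.toAdd c : (PowerSeries ℤ)ˣ) : PowerSeries ℤ)
            * Multiplicative.toAdd u) := by
  have h := actP_apply (toAdd c) (toAdd u)
  simp only [ofAdd_toAdd] at h
  rw [← ofAdd_toAdd ((zpowersHom (MulAut (Multiplicative (PowerSeries ℤ)))
      (AddEquiv.toMultiplicative onePlusXMul)) c u), h]

lemma tau_apply (n : ℕ) (f : PowerSeries ℤ) :
    tau n f = ∑ i ∈ Finset.range n,
      LaurentPolynomial.C (PowerSeries.coeff i f) * ((T 1 : A) - 1) ^ i := rfl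

lemma tau_one_plus_X (n : ℕ) (g : PowerSeries ℤ) :
    tau (n + 1) ((1 + PowerSeries.X) * g) - T 1 * tau (n + 1) g
      = -(LaurentPolynomial.C (PowerSeries.coeff n g) * ((T 1 : A) - 1) ^ (n + 1)) := by
  induction n with
  | zero =>
      have hc : PowerSeries.coeff 0 ((1 + PowerSeries.X) * g) = PowerSeries.coeff 0 g := by
        simp [PowerSeries.coeff_zero_eq_constantCoeff, map_mul]
      rw [tau_apply, tau_apply, Finset.sum_range_one, Finset.sum_range_one, hc]
      ring
  | succ n ih =>
      have hc : PowerSeries.coeff (n + 1) ((1 + PowerSeries.X) * g)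
          = PowerSeries.coeff (n + 1) g + PowerSeries.coeff n g := by
        rw [add_mul, one_mul, map_add, PowerSeries.coeff_succ_X_mul]
      rw [tau_succ (n + 1), tau_succ (n + 1), hc, map_add]
      linear_combination ih

lemma T_mul_T_neg (c : ℤ) (x : A) : T c * (T (-c) * x) = x := by
  rw [← mul_assoc, ← T_add, show c + -c = 0 by ring, T_zero, one_mul]

lemma tau_key (n : ℕ) (c : ℤ) (g : PowerSeries ℤ) :
    tau n (((onePlusX ^ c : (PowerSeries ℤ)ˣ) : PowerSeries ℤ) * g) - T c * tau n g ∈ J n := by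
  rcases n with _ | n
  · rw [J_zero_eq_top]; trivial
  have P1 : ∀ h : PowerSeries ℤ,
      tau (n+1) ((1 + PowerSeries.X) * h) - T 1 * tau (n+1) h ∈ J (n+1) := by
    intro h
    rw [tau_one_plus_X, J, Ideal.mem_span_singleton]
    exact (Dvd.intro_left _ rfl).neg_right
  have Pm1 : ∀ h : PowerSeries ℤ,
      tau (n+1) ((↑onePlusX⁻¹ : PowerSeries ℤ) * h) - T (-1) * tau (n+1) h ∈ J (n+1) := by
    intro h
    have h1 := P1 ((↑onePlusX⁻¹ : PowerSeries ℤ) * h)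
    have e : (1 + PowerSeries.X) * ((↑onePlusX⁻¹ : PowerSeries ℤ) * h) = h := by
      rw [← mul_assoc, ← onePlusX_val, ← Units.val_mul, mul_inv_cancel, Units.val_one, one_mul]
    rw [e] at h1
    have h2 := Ideal.mul_mem_left _ (T (-1)) h1
    have e2 : tau (n+1) ((↑onePlusX⁻¹ : PowerSeries ℤ) * h) - T (-1) * tau (n+1) h
        = -(T (-1) * (tau (n+1) h - T 1 * tau (n+1) ((↑onePlusX⁻¹ : PowerSeries ℤ) * h))) := by
      rw [mul_sub, ← mul_assoc, ← T_add, show (-1 : ℤ) + 1 = 0 by ring, T_zero, one_mul]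
      ring
    rw [e2]
    exact (J (n+1)).neg_mem h2
  induction c using Int.induction_on generalizing g with
  | zero => simpa [T_zero] using (J (n+1)).zero_mem
  | succ k ih =>
      have e : ((onePlusX ^ ((k : ℤ) + 1) : (PowerSeries ℤ)ˣ) : PowerSeries ℤ) * g
          = (1 + PowerSeries.X)
            * (((onePlusX ^ (k : ℤ) : (PowerSeries ℤ)ˣ) : PowerSeries ℤ) * g) := by
        rw [zpow_add_one, Units.val_mul, onePlusX_val]; ring
      rw [e]
      have h1 := P1 (((onePlusX ^ (k : ℤ) : (PowerSeries ℤ)ˣ) : PowerSeries ℤ) * g)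
      have h2 := Ideal.mul_mem_left _ (T 1) (ih g)
      have e2 : tau (n+1) ((1 + PowerSeries.X)
            * (((onePlusX ^ (k : ℤ) : (PowerSeries ℤ)ˣ) : PowerSeries ℤ) * g))
            - T ((k : ℤ) + 1) * tau (n+1) g
          = (tau (n+1) ((1 + PowerSeries.X)
              * (((onePlusX ^ (k : ℤ) : (PowerSeries ℤ)ˣ) : PowerSeries ℤ) * g))
              - T 1 * tau (n+1) (((onePlusX ^ (k : ℤ) : (PowerSeries ℤ)ˣ) : PowerSeries ℤ) * g))
            + T 1 * (tau (n+1) (((onePlusX ^ (k : ℤ) : (PowerSeries ℤ)ˣ) : PowerSeries ℤ) * g)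
              - T (k : ℤ) * tau (n+1) g) := by
        rw [show (T ((k : ℤ) + 1) : A) = T 1 * T (k : ℤ) by
          rw [← T_add]; congr 1; ring]
        ring
      rw [e2]
      exact (J (n+1)).add_mem h1 h2
  | pred k ih =>
      have e : ((onePlusX ^ (-(k : ℤ) - 1) : (PowerSeries ℤ)ˣ) : PowerSeries ℤ) * g
          = (↑onePlusX⁻¹ : PowerSeries ℤ)
            * (((onePlusX ^ (-(k : ℤ)) : (PowerSeries ℤ)ˣ) : PowerSeries ℤ) * g) := by
        rw [zpow_sub_one, Units.val_mul]; ring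
      rw [e]
      have h1 := Pm1 (((onePlusX ^ (-(k : ℤ)) : (PowerSeries ℤ)ˣ) : PowerSeries ℤ) * g)
      have h2 := Ideal.mul_mem_left _ (T (-1)) (ih g)
      have e2 : tau (n+1) ((↑onePlusX⁻¹ : PowerSeries ℤ)
            * (((onePlusX ^ (-(k : ℤ)) : (PowerSeries ℤ)ˣ) : PowerSeries ℤ) * g))
            - T (-(k : ℤ) - 1) * tau (n+1) g
          = (tau (n+1) ((↑onePlusX⁻¹ : PowerSeries ℤ)
              * (((onePlusX ^ (-(k : ℤ)) : (PowerSeries ℤ)ˣ) : PowerSeries ℤ) * g))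
              - T (-1) * tau (n+1) (((onePlusX ^ (-(k : ℤ)) : (PowerSeries ℤ)ˣ) : PowerSeries ℤ) * g))
            + T (-1) * (tau (n+1) (((onePlusX ^ (-(k : ℤ)) : (PowerSeries ℤ)ˣ) : PowerSeries ℤ) * g)
              - T (-(k : ℤ)) * tau (n+1) g) := by
        rw [show (T (-(k : ℤ) - 1) : A) = T (-1) * T (-(k : ℤ)) by
          rw [← T_add]; congr 1; ring]
        ring
      rw [e2]
      exact (J (n+1)).add_mem h1 h2

lemma quot_eq {n : ℕ} (g h : Lamplighter) (hr : g.right = h.right)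
    (hl : Multiplicative.toAdd h.left - Multiplicative.toAdd g.left ∈ J (n + 1)) :
    (QuotientGroup.mk g : Lamplighter ⧸ Subgroup.lowerCentralSeries (⊤ : Subgroup Lamplighter) (n + 1))
      = QuotientGroup.mk h := by
  rw [QuotientGroup.eq, lcs_eq]
  refine mem_S.mpr ⟨?_, ?_⟩
  · rw [SemidirectProduct.mul_right, SemidirectProduct.inv_right, hr, inv_mul_cancel]
  · rw [SemidirectProduct.mul_left, SemidirectProduct.inv_left, SemidirectProduct.inv_right,
      toAdd_mul, act_apply', act_apply', toAdd_ofAdd, toAdd_ofAdd, toAdd_inv, toAdd_inv]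
    have e : T (-Multiplicative.toAdd g.right) * -Multiplicative.toAdd g.left
          + T (-Multiplicative.toAdd g.right) * Multiplicative.toAdd h.left
        = T (-Multiplicative.toAdd g.right)
            * (Multiplicative.toAdd h.left - Multiplicative.toAdd g.left) := by
      ring
    rw [e]
    exact Ideal.mul_mem_left _ _ hl

lemma quot_eq' {n : ℕ} {g h : Lamplighter}
    (he : (QuotientGroup.mk g : Lamplighter ⧸ Subgroup.lowerCentralSeries (⊤ : Subgroup Lamplighter) (n + 1))
      = QuotientGroup.mk h) :
    g.right = h.right
      ∧ Multiplicative.toAdd h.left - Multiplicative.toAdd g.left ∈ J (n + 1) := by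
  rw [QuotientGroup.eq, lcs_eq] at he
  obtain ⟨h1, h2⟩ := mem_S.mp he
  rw [SemidirectProduct.mul_right, SemidirectProduct.inv_right] at h1
  refine ⟨inv_mul_eq_one.mp h1, ?_⟩
  rw [SemidirectProduct.mul_left, SemidirectProduct.inv_left, SemidirectProduct.inv_right,
    toAdd_mul, act_apply', act_apply', toAdd_ofAdd, toAdd_ofAdd, toAdd_inv, toAdd_inv] at h2
  have h3 := Ideal.mul_mem_left _ (T (Multiplicative.toAdd g.right)) h2
  have e : T (Multiplicative.toAdd g.right)
        * (T (-Multiplicative.toAdd g.right) * -Multiplicative.toAdd g.left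
          + T (-Multiplicative.toAdd g.right) * Multiplicative.toAdd h.left)
      = Multiplicative.toAdd h.left - Multiplicative.toAdd g.left := by
    rw [mul_add, ← mul_assoc, ← mul_assoc, ← T_add,
      show Multiplicative.toAdd g.right + -Multiplicative.toAdd g.right = 0 by ring,
      T_zero, one_mul, one_mul]
    ring
  rwa [e] at h3

def piFun (n : ℕ) (g : LamplighterCompleted) : Lamplighter ⧸ Subgroup.lowerCentralSeries (⊤ : Subgroup Lamplighter) n :=
  QuotientGroup.mk ⟨Multiplicative.ofAdd (tau n (Multiplicative.toAdd g.left)), g.right⟩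

def piHom (n : ℕ) : LamplighterCompleted →* Lamplighter ⧸ Subgroup.lowerCentralSeries (⊤ : Subgroup Lamplighter) n :=
  MonoidHom.mk' (piFun n) (by
    intro g h
    rcases n with _ | n
    · haveI : Subsingleton (Lamplighter ⧸ Subgroup.lowerCentralSeries (⊤ : Subgroup Lamplighter) 0) :=
        QuotientGroup.subsingleton_quotient_top
      exact Subsingleton.elim _ _
    · show QuotientGroup.mk _ = QuotientGroup.mk _ * QuotientGroup.mk _
      rw [← QuotientGroup.mk_mul]
      apply quot_eq
      · rfl
      · have e1 : Multiplicative.toAdd (g * h).left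
            = Multiplicative.toAdd g.left
              + ((onePlusX ^ Multiplicative.toAdd g.right : (PowerSeries ℤ)ˣ) : PowerSeries ℤ)
                * Multiplicative.toAdd h.left := by
          rw [SemidirectProduct.mul_left, toAdd_mul, actP_apply', toAdd_ofAdd]
        have e2 : Multiplicative.toAdd
              ((⟨Multiplicative.ofAdd (tau (n+1) (Multiplicative.toAdd g.left)), g.right⟩
                  * ⟨Multiplicative.ofAdd (tau (n+1) (Multiplicative.toAdd h.left)), h.right⟩ :
                Lamplighter)).left
            = tau (n+1) (Multiplicative.toAdd g.left)
              + T (Multiplicative.toAdd g.right)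
                * tau (n+1) (Multiplicative.toAdd h.left) := by
          rw [SemidirectProduct.mul_left, toAdd_mul, act_apply', toAdd_ofAdd, toAdd_ofAdd]
          rfl
        rw [e2]
        show _ - Multiplicative.toAdd (Multiplicative.ofAdd _) ∈ _
        rw [toAdd_ofAdd, e1, map_add]
        have e3 : tau (n+1) (Multiplicative.toAdd g.left)
              + T (Multiplicative.toAdd g.right) * tau (n+1) (Multiplicative.toAdd h.left)
              - (tau (n+1) (Multiplicative.toAdd g.left)
                + tau (n+1)
                  (((onePlusX ^ Multiplicative.toAdd g.right : (PowerSeries ℤ)ˣ) : PowerSeries ℤ)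
                    * Multiplicative.toAdd h.left))
            = -(tau (n+1)
                  (((onePlusX ^ Multiplicative.toAdd g.right : (PowerSeries ℤ)ˣ) : PowerSeries ℤ)
                    * Multiplicative.toAdd h.left)
                - T (Multiplicative.toAdd g.right) * tau (n+1) (Multiplicative.toAdd h.left)) := by
          ring
        rw [e3]
        exact (J (n+1)).neg_mem (tau_key (n+1) _ _))

lemma piHom_compat (n : ℕ) (g : LamplighterCompleted) :
    nilpTransition Lamplighter n (piHom (n + 1) g) = piHom n g := by
  rcases n with _ | n
  · haveI : Subsingleton (Lamplighter ⧸ Subgroup.lowerCentralSeries (⊤ : Subgroup Lamplighter) 0) :=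
      QuotientGroup.subsingleton_quotient_top
    exact Subsingleton.elim _ _
  · show nilpTransition _ _ (QuotientGroup.mk _) = QuotientGroup.mk _
    show QuotientGroup.mk ((MonoidHom.id Lamplighter) _) = QuotientGroup.mk _
    apply quot_eq
    · rfl
    · show Multiplicative.toAdd (Multiplicative.ofAdd _) - Multiplicative.toAdd
        ((MonoidHom.id Lamplighter)
          (⟨Multiplicative.ofAdd (tau (n+2) (Multiplicative.toAdd g.left)), g.right⟩ :
            Lamplighter)).left ∈ _
      rw [MonoidHom.id_apply, toAdd_ofAdd, toAdd_ofAdd, tau_succ (n+1)]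
      have e : tau (n+1) (Multiplicative.toAdd g.left)
            - (tau (n+1) (Multiplicative.toAdd g.left)
              + LaurentPolynomial.C (PowerSeries.coeff (n+1) (Multiplicative.toAdd g.left))
                * ((T 1 : A) - 1) ^ (n+1))
          = -(LaurentPolynomial.C (PowerSeries.coeff (n+1) (Multiplicative.toAdd g.left))
              * ((T 1 : A) - 1) ^ (n+1)) := by ring
      rw [e, J]
      exact neg_mem (Ideal.mem_span_singleton.mpr (Dvd.intro_left _ rfl))

/-- The homomorphism `C ⋉ ℤ⟦x⟧ →* L̂`. -/
def Theta : LamplighterCompleted →* ↥(PronilpotentCompletion Lamplighter) :=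
  (Pi.monoidHom piHom).codRestrict _ (fun g n => piHom_compat n g)

section Phi
variable (φr : LaurentPolynomial ℤ →+* PowerSeries ℤ)
  (hφr : φr (LaurentPolynomial.T 1) = 1 + PowerSeries.X)
include hφr

lemma phi_T_neg_one : φr (T (-1)) = ((onePlusX⁻¹ : (PowerSeries ℤ)ˣ) : PowerSeries ℤ) := by
  apply Units.eq_inv_of_mul_eq_one_left
  rw [onePlusX_val, ← hφr, ← map_mul, ← T_add, show (1 : ℤ) + -1 = 0 by ring, T_zero, map_one]

lemma phi_T (c : ℤ) :
    φr (T c) = ((onePlusX ^ c : (PowerSeries ℤ)ˣ) : PowerSeries ℤ) := by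
  induction c using Int.induction_on with
  | zero => simp [T_zero]
  | succ k ih =>
      rw [show (T ((k : ℤ) + 1) : A) = T (k : ℤ) * T 1 by rw [← T_add], map_mul, ih, hφr,
        zpow_add_one, Units.val_mul, onePlusX_val]
  | pred k ih =>
      rw [show (T (-(k : ℤ) - 1) : A) = T (-(k : ℤ)) * T (-1) by rw [← T_add, show -(k : ℤ) + -1 = -(k : ℤ) - 1 by ring], map_mul, ih,
        phi_T_neg_one φr hφr, zpow_sub_one, Units.val_mul]

lemma phi_s : φr ((T 1 : A) - 1) = PowerSeries.X := by
  rw [map_sub, hφr, map_one]; ring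

lemma phi_J {m : ℕ} {b : A} (hb : b ∈ J m) : (PowerSeries.X : PowerSeries ℤ) ^ m ∣ φr b := by
  rw [J, Ideal.mem_span_singleton] at hb
  obtain ⟨q, rfl⟩ := hb
  rw [map_mul, map_pow, phi_s φr hφr]
  exact dvd_mul_right _ _

omit hφr in
lemma phi_C (a : ℤ) : φr (LaurentPolynomial.C a) = PowerSeries.C a := by
  have h1 : φr (LaurentPolynomial.C a) = ((a : ℤ) : PowerSeries ℤ) :=
    eq_intCast (φr.comp (LaurentPolynomial.C : ℤ →+* LaurentPolynomial ℤ)) a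
  exact h1.trans (eq_intCast (PowerSeries.C) a).symm

lemma phi_tau (n : ℕ) (f : PowerSeries ℤ) :
    φr (tau n f) = ∑ i ∈ Finset.range n,
      PowerSeries.C (PowerSeries.coeff i f) * PowerSeries.X ^ i := by
  rw [tau_apply, map_sum]
  refine Finset.sum_congr rfl fun i _ => ?_
  rw [map_mul, map_pow, phi_s φr hφr, phi_C φr]

lemma coeff_phi_tau {n j : ℕ} (hj : j < n) (f : PowerSeries ℤ) :
    PowerSeries.coeff j (φr (tau n f)) = PowerSeries.coeff j f := by
  rw [phi_tau φr hφr, map_sum]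
  simp only [PowerSeries.coeff_C_mul, PowerSeries.coeff_X_pow, mul_ite, mul_one, mul_zero,
    Finset.sum_ite_eq, Finset.mem_range, hj, if_true]

omit hφr in
lemma tau_psone (n : ℕ) : tau (n + 1) (1 : PowerSeries ℤ) = 1 := by
  rw [tau_apply]
  simp [PowerSeries.coeff_one, apply_ite (LaurentPolynomial.C), ite_mul,
    Finset.sum_ite_eq', Finset.mem_range]

lemma key' (m : ℕ) (b : A) : b - tau m (φr b) ∈ J m := by
  rcases m with _ | n
  · rw [J_zero_eq_top]; trivial
  have step1 : ∀ b : A, b - tau (n+1) (φr b) ∈ J (n+1)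
      → T 1 * b - tau (n+1) (φr (T 1 * b)) ∈ J (n+1) := by
    intro b hb
    have h1 : tau (n+1) ((1 + PowerSeries.X) * φr b) - T 1 * tau (n+1) (φr b) ∈ J (n+1) := by
      have h := tau_key (n+1) 1 (φr b)
      rwa [zpow_one, onePlusX_val] at h
    have h2 := Ideal.mul_mem_left _ (T 1) hb
    have e : T 1 * b - tau (n+1) (φr (T 1 * b))
        = T 1 * (b - tau (n+1) (φr b))
          - (tau (n+1) ((1 + PowerSeries.X) * φr b) - T 1 * tau (n+1) (φr b)) := by
      rw [map_mul, hφr]; ring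
    rw [e]
    exact (J (n+1)).sub_mem h2 h1
  have stepm1 : ∀ b : A, b - tau (n+1) (φr b) ∈ J (n+1)
      → T (-1) * b - tau (n+1) (φr (T (-1) * b)) ∈ J (n+1) := by
    intro b hb
    have h1 := tau_key (n+1) (-1) (φr b)
    have h2 := Ideal.mul_mem_left _ (T (-1)) hb
    have e : T (-1) * b - tau (n+1) (φr (T (-1) * b))
        = T (-1) * (b - tau (n+1) (φr b))
          - (tau (n+1) (((onePlusX ^ (-1 : ℤ) : (PowerSeries ℤ)ˣ) : PowerSeries ℤ) * φr b)
            - T (-1) * tau (n+1) (φr b)) := by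
      rw [map_mul, phi_T φr hφr (-1)]; ring
    rw [e]
    exact (J (n+1)).sub_mem h2 h1
  have hT : ∀ k : ℤ, T k - tau (n+1) (φr (T k)) ∈ J (n+1) := by
    intro k
    induction k using Int.induction_on with
    | zero =>
        rw [T_zero, map_one, tau_psone, sub_self]
        exact (J (n+1)).zero_mem
    | succ k ih =>
        have h := step1 _ ih
        rwa [show T 1 * T (k : ℤ) = T ((k : ℤ) + 1) by rw [← T_add]; congr 1; ring] at h
    | pred k ih =>
        have h := stepm1 _ ih
        rwa [show T (-1) * T (-(k : ℤ)) = T (-(k : ℤ) - 1) by rw [← T_add]; congr 1; ring] at h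
  induction b using LaurentPolynomial.induction_on' with
  | add p q hp hq =>
      have e : p + q - tau (n+1) (φr (p + q))
          = (p - tau (n+1) (φr p)) + (q - tau (n+1) (φr q)) := by
        rw [map_add, map_add]; ring
      rw [e]
      exact (J (n+1)).add_mem hp hq
  | C_mul_T k a =>
      have e : LaurentPolynomial.C a * T k - tau (n+1) (φr (LaurentPolynomial.C a * T k))
          = a • (T k - tau (n+1) (φr (T k))) := by
        have c2 : LaurentPolynomial.C a * T k = a • T k := by
          rw [eq_intCast (LaurentPolynomial.C : ℤ →+* LaurentPolynomial ℤ) a, ← zsmul_eq_mul]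
        rw [c2, map_zsmul φr, map_zsmul (tau (n+1)), smul_sub]
      rw [e]
      exact zsmul_mem (hT k) a


lemma Theta_injective : Function.Injective Theta := by
  rw [injective_iff_map_eq_one]
  intro g hgone
  have hcomp : ∀ n, piHom n g = 1 := by
    intro n
    have h := congrFun (congrArg Subtype.val hgone) n
    exact h
  have hlev : ∀ n : ℕ, g.right = 1 ∧ tau (n+1) (Multiplicative.toAdd g.left) ∈ J (n+1) := by
    intro n
    have h' : (QuotientGroup.mk
          (⟨Multiplicative.ofAdd (tau (n+1) (Multiplicative.toAdd g.left)), g.right⟩ :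
            Lamplighter) :
          Lamplighter ⧸ Subgroup.lowerCentralSeries (⊤ : Subgroup Lamplighter) (n+1))
        = QuotientGroup.mk 1 := by
      rw [QuotientGroup.mk_one]; exact hcomp (n+1)
    obtain ⟨h1, h2⟩ := quot_eq' h'
    simp only [SemidirectProduct.one_left, SemidirectProduct.one_right, toAdd_one, toAdd_ofAdd,
      zero_sub] at h1 h2
    have h3 := neg_mem h2
    rw [neg_neg] at h3
    exact ⟨h1, h3⟩
  have hf : Multiplicative.toAdd g.left = 0 := by
    apply PowerSeries.ext
    intro i
    have h2 := (hlev i).2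
    have hd := phi_J φr hφr h2
    rw [PowerSeries.X_pow_dvd_iff] at hd
    have h3 := hd i (Nat.lt_succ_self i)
    rw [coeff_phi_tau φr hφr (Nat.lt_succ_self i)] at h3
    simpa using h3
  apply SemidirectProduct.ext
  · rw [SemidirectProduct.one_left, ← ofAdd_toAdd g.left, hf, ofAdd_zero]
  · rw [SemidirectProduct.one_right]
    exact (hlev 0).1

lemma Theta_surjective : Function.Surjective Theta := by
  rintro ⟨x, hx⟩
  choose g hg using fun n => QuotientGroup.mk_surjective (x n)
  have hrel : ∀ n : ℕ, (g (n+1)).right = (g (n+2)).right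
      ∧ Multiplicative.toAdd (g (n+2)).left - Multiplicative.toAdd (g (n+1)).left
          ∈ J (n+1) := by
    intro n
    apply quot_eq'
    have h := hx (n+1)
    rw [← hg (n+2), ← hg (n+1)] at h
    exact h.symm
  have hc : ∀ n : ℕ, (g (n+1)).right = (g 1).right := by
    intro n
    induction n with
    | zero => rfl
    | succ n ih => rw [← (hrel n).1, ih]
  have htel : ∀ i n : ℕ, i ≤ n →
      Multiplicative.toAdd (g (n+1)).left - Multiplicative.toAdd (g (i+1)).left
        ∈ J (i+1) := by
    intro i n hin
    induction n with
    | zero =>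
        obtain rfl : i = 0 := Nat.le_zero.mp hin
        simpa using (J 1).zero_mem
    | succ n ih =>
        rcases Nat.lt_or_ge i (n+1) with hlt | hge
        · have h1 := ih (Nat.lt_succ_iff.mp hlt)
          have h2 := J_mono (by omega : i + 1 ≤ n + 1) (hrel n).2
          have h3 := (J (i+1)).add_mem h2 h1
          rwa [sub_add_sub_cancel] at h3
        · obtain rfl : i = n + 1 := by omega
          simpa using (J (n+2)).zero_mem
  refine ⟨⟨Multiplicative.ofAdd (PowerSeries.mk (fun i =>
      PowerSeries.coeff i (φr (Multiplicative.toAdd (g (i+1)).left)))), (g 1).right⟩, ?_⟩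
  apply Subtype.ext
  funext n
  show piHom n _ = x n
  rcases n with _ | n
  · haveI : Subsingleton (Lamplighter ⧸ Subgroup.lowerCentralSeries (⊤ : Subgroup Lamplighter) 0) :=
      QuotientGroup.subsingleton_quotient_top
    exact Subsingleton.elim _ _
  · rw [← hg (n+1)]
    show QuotientGroup.mk _ = QuotientGroup.mk _
    apply quot_eq
    · exact (hc n).symm
    · show Multiplicative.toAdd (g (n+1)).left - Multiplicative.toAdd (Multiplicative.ofAdd _) ∈ _
      rw [toAdd_ofAdd]
      set b := Multiplicative.toAdd (g (n+1)).left with hb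
      have htau : tau (n+1) (Multiplicative.toAdd (Multiplicative.ofAdd (PowerSeries.mk (fun i =>
            PowerSeries.coeff i (φr (Multiplicative.toAdd (g (i+1)).left))))))
          = tau (n+1) (φr b) := by
        rw [toAdd_ofAdd, tau_apply, tau_apply]
        refine Finset.sum_congr rfl fun i hi => ?_
        have hi' : i ≤ n := Nat.lt_succ_iff.mp (Finset.mem_range.mp hi)
        congr 2
        rw [PowerSeries.coeff_mk]
        have hd := phi_J φr hφr (htel i n hi')
        rw [PowerSeries.X_pow_dvd_iff] at hd
        have h3 := hd i (Nat.lt_succ_self i)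
        rw [map_sub, map_sub] at h3
        exact (sub_eq_zero.mp h3).symm
      rw [htau]
      exact key' φr hφr (n+1) b

end Phi

end Lamp2
/-- **Lemma 4.1.** The pronilpotent completion of the integral lamplighter group `L = C ⋉ ℤ[t,t⁻¹]`
is `C ⋉ ℤ⟦x⟧` (with `t` acting by multiplication by `1 + x`), via an isomorphism under which the
canonical map `L → L̂` corresponds to the map `C ⋉ ℤ[t,t⁻¹] → C ⋉ ℤ⟦x⟧` which is the identity on
`C` and the ring homomorphism `φ` with `φ(t) = 1 + x` on `ℤ[t,t⁻¹]`. -/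
theorem pronilpotentCompletion_lamplighter_iso
    (φr : LaurentPolynomial ℤ →+* PowerSeries ℤ)
    (hφr : φr (LaurentPolynomial.T 1) = 1 + PowerSeries.X) :
    ∃ ψ : ↥(PronilpotentCompletion Lamplighter) ≃* LamplighterCompleted,
      ∀ (a : LaurentPolynomial ℤ) (n : ℤ),
        ψ (toPronilpotentCompletion Lamplighter
            ⟨Multiplicative.ofAdd a, Multiplicative.ofAdd n⟩)
          = ⟨Multiplicative.ofAdd (φr a), Multiplicative.ofAdd n⟩ := by
  have hbij : Function.Bijective Lamp2.Theta :=
    ⟨Lamp2.Theta_injective φr hφr, Lamp2.Theta_surjective φr hφr⟩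
  refine ⟨(MulEquiv.ofBijective Lamp2.Theta hbij).symm, ?_⟩
  intro a n
  rw [MulEquiv.symm_apply_eq]
  apply Subtype.ext
  funext m
  rcases m with _ | m
  · haveI : Subsingleton (Lamplighter ⧸ Subgroup.lowerCentralSeries (⊤ : Subgroup Lamplighter) 0) :=
      QuotientGroup.subsingleton_quotient_top
    exact Subsingleton.elim _ _
  · show QuotientGroup.mk _ = QuotientGroup.mk _
    apply Lamp2.quot_eq
    · rfl
    · simp only [toAdd_ofAdd]
      have h := (LampAux.J (m+1)).neg_mem (Lamp2.key' φr hφr (m+1) a)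
      rwa [neg_sub] at h
end
end
end

section
/- Let 𝔤 be a finitely generated Lie algebra over ℤ (generated as a Lie algebra by finitely many elements), with lower central series γ₁(𝔤) = 𝔤, γ_{n+1}(𝔤) = [γ_n(𝔤), 𝔤], and let 𝔤̂ = lim_n 𝔤/γ_n(𝔤) be its pronilpotent completion, realized as the Lie subalgebra of ∏_n 𝔤/γ_n(𝔤) consisting of families compatible with the natural projections, with canonical Lie algebra homomorphism η: 𝔤 → 𝔤̂. Then for every n ≥ 1 the map η induces an isomorphism 𝔤/γ_n(𝔤) ≅ 𝔤̂/γ_n(𝔤̂). In particular, η induces an isomorphism of abelianizations 𝔤/[𝔤,𝔤] ≅ 𝔤̂/[𝔤̂,𝔤̂]. -/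
noncomputable section

/-- Componentwise Lie ring structure on a product of Lie rings. -/
instance Pi.lieRing {ι : Type} (Lf : ι → Type) [∀ i, LieRing (Lf i)] :
    LieRing (∀ i, Lf i) :=
  { Pi.addCommGroup with
    bracket := fun x y => fun i => ⁅x i, y i⁆
    add_lie := fun x y z => funext fun i => add_lie (x i) (y i) (z i)
    lie_add := fun x y z => funext fun i => lie_add (x i) (y i) (z i)
    lie_self := fun x => funext fun i => lie_self (x i)
    leibniz_lie := fun x y z => funext fun i => leibniz_lie (x i) (y i) (z i) }

variable (L : Type) [LieRing L]

/-- The transition map `𝔤/γ_{n+2}(𝔤) → 𝔤/γ_{n+1}(𝔤)` between lower-central quotients of a Lie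
algebra over `ℤ` (in Mathlib's indexing, `lowerCentralSeries ℤ L L n = γ_{n+1}(L)`). -/
def lieNilpTransition (n : ℕ) :
    (L ⧸ LieModule.lowerCentralSeries ℤ L L (n + 1)) →ₗ⁅ℤ⁆
      (L ⧸ LieModule.lowerCentralSeries ℤ L L n) :=
  { toLinearMap := Submodule.mapQ _ _ LinearMap.id
      (fun x hx => LieModule.antitone_lowerCentralSeries ℤ L L (Nat.le_succ n) hx)
    map_lie' := by
      rintro ⟨x⟩ ⟨y⟩
      rfl }

/-- The pronilpotent completion `𝔤̂ = lim_n 𝔤/γ_n(𝔤)` of a Lie algebra over `ℤ`, realized as the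
Lie subalgebra of compatible families in `∏_n 𝔤/γ_n(𝔤)`. -/
def LiePronilpotentCompletion :
    LieSubalgebra ℤ (∀ n : ℕ, L ⧸ LieModule.lowerCentralSeries ℤ L L n) where
  carrier := {x | ∀ n, lieNilpTransition L n (x (n + 1)) = x n}
  add_mem' := fun ha hb n => by
    rw [Pi.add_apply, Pi.add_apply, map_add (lieNilpTransition L n), ha n, hb n]
  zero_mem' := fun n => by
    rw [Pi.zero_apply, Pi.zero_apply, map_zero (lieNilpTransition L n)]
  smul_mem' := fun c x hx n => by
    rw [Pi.smul_apply, Pi.smul_apply, map_smul (lieNilpTransition L n), hx n]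
  lie_mem' := fun {x y} hx hy n => by
    show lieNilpTransition L n ⁅x (n + 1), y (n + 1)⁆ = ⁅x n, y n⁆
    rw [LieHom.map_lie, hx n, hy n]

/-- The canonical Lie algebra homomorphism `η : 𝔤 → 𝔤̂`. -/
def toLiePronilpotentCompletion : L →ₗ⁅ℤ⁆ ↥(LiePronilpotentCompletion L) where
  toFun a :=
    ⟨fun n => LieSubmodule.Quotient.mk a, fun n => rfl⟩
  map_add' a b := Subtype.ext (funext fun n => by
    show LieSubmodule.Quotient.mk (a + b) = LieSubmodule.Quotient.mk a + LieSubmodule.Quotient.mk b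
    rfl)
  map_smul' c a := Subtype.ext (funext fun n => rfl)
  map_lie' := by
    intro a b
    exact Subtype.ext (funext fun n => rfl)

section Aux0
variable {L : Type} [LieRing L] (N : LieSubmodule ℤ L L)

lemma lmk_add (a b : L) : (LieSubmodule.Quotient.mk (N := N) (a + b)) =
    LieSubmodule.Quotient.mk a + LieSubmodule.Quotient.mk b := rfl

lemma lmk_sub (a b : L) : (LieSubmodule.Quotient.mk (N := N) (a - b)) =
    LieSubmodule.Quotient.mk a - LieSubmodule.Quotient.mk b := rfl

lemma lmk_zero : (LieSubmodule.Quotient.mk (N := N) 0) = 0 := rfl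

lemma lmk_sum {ι : Type} (s : Finset ι) (f : ι → L) :
    (LieSubmodule.Quotient.mk (N := N) (∑ i ∈ s, f i)) =
      ∑ i ∈ s, LieSubmodule.Quotient.mk (N := N) (f i) := by
  classical
  induction s using Finset.cons_induction with
  | empty => simp [lmk_zero]
  | cons a s ha ih => rw [Finset.sum_cons, Finset.sum_cons, lmk_add, ih]

lemma lmk_lie_sum {ι : Type} (s : Finset ι) (t : L) (f : ι → L) :
    (LieSubmodule.Quotient.mk (N := N) ⁅t, ∑ i ∈ s, f i⁆) =
      ∑ i ∈ s, LieSubmodule.Quotient.mk (N := N) ⁅t, f i⁆ := by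
  classical
  induction s using Finset.cons_induction with
  | empty => simp [lmk_zero]
  | cons a s ha ih => rw [Finset.sum_cons, Finset.sum_cons, lie_add, lmk_add, ih]

end Aux0

section Aux
variable (L : Type) [LieRing L]

local notation "γ" => LieModule.lowerCentralSeries ℤ L L

lemma lieNilpTransition_mk (n : ℕ) (a : L) :
    lieNilpTransition L n (LieSubmodule.Quotient.mk (N := γ (n+1)) a) =
      LieSubmodule.Quotient.mk (N := γ n) a := rfl

lemma comp_zero_of_le {x : ↥(LiePronilpotentCompletion L)} {k : ℕ}
    (hk : (x : ∀ n, L ⧸ γ n) k = 0) :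
    ∀ n ≤ k, (x : ∀ n, L ⧸ γ n) n = 0 := by
  induction k with
  | zero => intro n hn; exact Nat.le_zero.mp hn ▸ hk
  | succ k ih =>
    intro n hn
    rcases Nat.eq_or_lt_of_le hn with h | h
    · exact h ▸ hk
    · refine ih ?_ n (Nat.lt_succ_iff.mp h)
      have := x.2 k
      rw [hk] at this
      simpa using this.symm

/-- Projection at level `k` as a Lie algebra hom. -/
def projLevel (k : ℕ) : ↥(LiePronilpotentCompletion L) →ₗ⁅ℤ⁆ (L ⧸ γ k) where
  toFun x := (x : ∀ n, L ⧸ γ n) k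
  map_add' x y := rfl
  map_smul' c x := rfl
  map_lie' := rfl

/-- mk as a Lie algebra hom. -/
def lieQuotMkHom (k : ℕ) : L →ₗ⁅ℤ⁆ (L ⧸ γ k) where
  toLinearMap := (γ k).toSubmodule.mkQ
  map_lie' := rfl

lemma lieQuotMkHom_surj (k : ℕ) : Function.Surjective (lieQuotMkHom L k) :=
  Submodule.mkQ_surjective _

lemma lcs_quot_eq_bot (k : ℕ) :
    LieModule.lowerCentralSeries ℤ (L ⧸ γ k) (L ⧸ γ k) k = ⊥ := by
  rw [← LieIdeal.lowerCentralSeries_map_eq (f := lieQuotMkHom L k) k (lieQuotMkHom_surj L k)]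
  rw [LieIdeal.map_eq_bot_iff]
  intro x hx
  simp only [LieHom.mem_ker]
  change LieSubmodule.Quotient.mk x = 0
  rwa [LieSubmodule.Quotient.mk_eq_zero']

lemma mem_lcs_map {A B : Type} [LieRing A] [LieRing B]
    (f : A →ₗ⁅ℤ⁆ B) {k : ℕ} {x : A} (h : x ∈ LieModule.lowerCentralSeries ℤ A A k) :
    f x ∈ LieModule.lowerCentralSeries ℤ B B k :=
  LieIdeal.map_lowerCentralSeries_le k (LieIdeal.mem_map h)

end Aux

section Aux2
variable (L : Type) [LieRing L]

local notation "γ" => LieModule.lowerCentralSeries ℤ L L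

lemma lcs_succ_le_iSup (S : Finset L) (hS : LieSubalgebra.lieSpan ℤ L ↑S = ⊤) (j : ℕ) :
    (γ (j+1)).toSubmodule ≤
      ⨆ t : {x // x ∈ S}, Submodule.map (LieAlgebra.ad ℤ L (t : L)) (γ j).toSubmodule := by
  set M := ⨆ t : {x // x ∈ S}, Submodule.map (LieAlgebra.ad ℤ L (t : L)) (γ j).toSubmodule with hM
  rw [LieModule.lowerCentralSeries_succ]
  rw [LieSubmodule.lieIdeal_oper_eq_linear_span']
  rw [Submodule.span_le]
  rintro m ⟨a, -, w, hw, rfl⟩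
  have ha : a ∈ LieSubalgebra.lieSpan ℤ L ↑S := by rw [hS]; exact trivial
  revert w
  refine LieSubalgebra.lieSpan_induction (R := ℤ) (p := fun a _ => ∀ w ∈ γ j, ⁅a, w⁆ ∈ M)
    ?_ ?_ ?_ ?_ ?_ ha
  · intro t ht w hw
    exact le_iSup (fun t : {x // x ∈ S} => Submodule.map (LieAlgebra.ad ℤ L (t : L)) (γ j).toSubmodule) ⟨t, ht⟩ ⟨w, hw, rfl⟩
  · intro w hw; rw [zero_lie]; exact M.zero_mem
  · intro a b _ _ ha hb w hw; rw [add_lie]; exact M.add_mem (ha w hw) (hb w hw)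
  · intro r a _ h w hw; rw [smul_lie]; exact M.smul_mem r (h w hw)
  · intro a b _ _ ha hb w hw
    rw [lie_lie]
    have hbw : ⁅b, w⁆ ∈ γ j := by
      refine LieModule.antitone_lowerCentralSeries ℤ L L (Nat.le_succ j) ?_
      rw [LieModule.lowerCentralSeries_succ]
      exact LieSubmodule.lie_mem_lie trivial hw
    have haw : ⁅a, w⁆ ∈ γ j := by
      refine LieModule.antitone_lowerCentralSeries ℤ L L (Nat.le_succ j) ?_
      rw [LieModule.lowerCentralSeries_succ]
      exact LieSubmodule.lie_mem_lie trivial hw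
    exact M.sub_mem (ha _ hbw) (hb _ haw)

lemma lcs_decomp (S : Finset L) (hS : LieSubalgebra.lieSpan ℤ L ↑S = ⊤) (j : ℕ) {u : L}
    (hu : u ∈ γ (j+1)) :
    ∃ w : {x // x ∈ S} → L, (∀ t, w t ∈ γ j) ∧ ∑ t : {x // x ∈ S}, ⁅(t : L), w t⁆ = u := by
  have := lcs_succ_le_iSup L S hS j hu
  rw [Submodule.mem_iSup_iff_exists_finsupp] at this
  obtain ⟨f, hf, hsum⟩ := this
  choose w hw hw2 using fun t => hf t
  refine ⟨w, hw, ?_⟩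
  rw [← hsum, Finsupp.sum_fintype _ _ (fun _ => rfl)]
  refine Finset.sum_congr rfl fun t _ => ?_
  rw [← hw2 t]; rfl

end Aux2

section Aux3
variable (L : Type) [LieRing L]

local notation "γ" => LieModule.lowerCentralSeries ℤ L L

lemma key_mem_lcs (S : Finset L) (hS : LieSubalgebra.lieSpan ℤ L ↑S = ⊤) :
    ∀ (k : ℕ) (x : ↥(LiePronilpotentCompletion L)), (x : ∀ n, L ⧸ γ n) k = 0 →
      x ∈ LieModule.lowerCentralSeries ℤ ↥(LiePronilpotentCompletion L)
        ↥(LiePronilpotentCompletion L) k := by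
  intro k
  induction k with
  | zero => intro x _; exact LieSubmodule.mem_top x
  | succ k ih =>
    intro x hx
    -- lifts with lift 0 = 0
    have hlift : ∀ (n : ℕ) (q : L ⧸ γ n), ∃ a : L,
        (LieSubmodule.Quotient.mk a : L ⧸ γ n) = q ∧ (q = 0 → a = 0) := by
      intro n q
      by_cases h : q = 0
      · exact ⟨0, by simp [h, lmk_zero], fun _ => rfl⟩
      · obtain ⟨a, ha⟩ := LieSubmodule.Quotient.surjective_mk' (γ n) q
        exact ⟨a, ha, fun h' => absurd h' h⟩
    choose lift hlift1 hlift2 using hlift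
    set P : ℕ → L := fun n => lift n ((x : ∀ n, L ⧸ γ n) n) with hPdef
    set u : ℕ → L := fun n => P (n + 1) - P n with hudef
    have hP : ∀ n, (LieSubmodule.Quotient.mk (P n) : L ⧸ γ n) = (x : ∀ n, L ⧸ γ n) n :=
      fun n => hlift1 n _
    have hPzero : ∀ n ≤ k + 1, P n = 0 := fun n hn =>
      hlift2 n _ (comp_zero_of_le L hx n hn)
    have hPtrans : ∀ n, (LieSubmodule.Quotient.mk (P (n + 1)) : L ⧸ γ n)
        = (x : ∀ n, L ⧸ γ n) n := by
      intro n
      calc (LieSubmodule.Quotient.mk (P (n + 1)) : L ⧸ γ n)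
          = lieNilpTransition L n (LieSubmodule.Quotient.mk (P (n + 1))) := rfl
        _ = lieNilpTransition L n ((x : ∀ n, L ⧸ γ n) (n + 1)) := by rw [hP (n + 1)]
        _ = (x : ∀ n, L ⧸ γ n) n := x.2 n
    have hu_mem : ∀ n, u n ∈ γ n := by
      intro n
      rw [← LieSubmodule.Quotient.mk_eq_zero']
      show (LieSubmodule.Quotient.mk (P (n + 1) - P n) : L ⧸ γ n) = 0
      rw [lmk_sub, hPtrans n, hP n, sub_self]
    have hu0 : ∀ n ≤ k, u n = 0 := by
      intro n hn
      show P (n + 1) - P n = 0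
      rw [hPzero (n + 1) (by omega), hPzero n (by omega), sub_self]
    have hu_sum : ∀ n, ∑ j ∈ Finset.range n, u j = P n := by
      intro n
      rw [hudef]
      rw [Finset.sum_range_sub (f := P)]
      rw [hPzero 0 (by omega), sub_zero]
    -- decompose each u j
    have hdec : ∀ j, ∃ w : {y // y ∈ S} → L, (∀ t, w t ∈ γ (j - 1)) ∧
        (∑ t : {y // y ∈ S}, ⁅(t : L), w t⁆ = u j) ∧ (j ≤ k → w = 0) := by
      intro j
      by_cases hj : j ≤ k
      · refine ⟨0, fun t => LieSubmodule.zero_mem _, ?_, fun _ => rfl⟩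
        simp [hu0 j hj]
      · have hj1 : j - 1 + 1 = j := by omega
        obtain ⟨w, hw, hws⟩ := lcs_decomp L S hS (j - 1) (u := u j)
          (by rw [hj1]; exact hu_mem j)
        exact ⟨w, hw, hws, fun h => absurd h hj⟩
    choose w hw1 hw2 hw3 using hdec
    -- build the elements W t of the completion
    have hWmem : ∀ t : {y // y ∈ S},
        (fun n => (LieSubmodule.Quotient.mk (∑ j ∈ Finset.range (n + 1), w j t) : L ⧸ γ n))
          ∈ LiePronilpotentCompletion L := by
      intro t n
      show lieNilpTransition L n (LieSubmodule.Quotient.mk (∑ j ∈ Finset.range (n + 2), w j t))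
        = LieSubmodule.Quotient.mk (∑ j ∈ Finset.range (n + 1), w j t)
      rw [lieNilpTransition_mk, Finset.sum_range_succ, lmk_add]
      have : (LieSubmodule.Quotient.mk (w (n + 1) t) : L ⧸ γ n) = 0 := by
        rw [LieSubmodule.Quotient.mk_eq_zero']
        simpa using hw1 (n + 1) t
      rw [this, add_zero]
    set W : {y // y ∈ S} → ↥(LiePronilpotentCompletion L) :=
      fun t => ⟨_, hWmem t⟩ with hWdef
    have hWk : ∀ t, ((W t : ↥(LiePronilpotentCompletion L)) : ∀ n, L ⧸ γ n) k = 0 := by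
      intro t
      show (LieSubmodule.Quotient.mk (∑ j ∈ Finset.range (k + 1), w j t) : L ⧸ γ k) = 0
      have h0 : ∑ j ∈ Finset.range (k + 1), w j t = 0 := by
        refine Finset.sum_eq_zero fun j hj => ?_
        rw [hw3 j (Nat.lt_succ_iff.mp (Finset.mem_range.mp hj))]
        rfl
      rw [h0]
      exact lmk_zero _
    -- x is the sum of brackets
    have hxeq : x = ∑ t : {y // y ∈ S}, ⁅toLiePronilpotentCompletion L (t : L), W t⁆ := by
      apply Subtype.ext
      rw [AddSubmonoidClass.coe_finset_sum]
      funext n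
      rw [Finset.sum_apply]
      have hsum : ∑ t : {y // y ∈ S},
          ((⁅toLiePronilpotentCompletion L (t : L), W t⁆ :
            ↥(LiePronilpotentCompletion L)) : ∀ n, L ⧸ γ n) n
          = (x : ∀ n, L ⧸ γ n) n := by
        have hcomp : ∀ t : {y // y ∈ S},
            ((⁅toLiePronilpotentCompletion L (t : L), W t⁆ :
              ↥(LiePronilpotentCompletion L)) : ∀ n, L ⧸ γ n) n
            = LieSubmodule.Quotient.mk
                (∑ j ∈ Finset.range (n + 1), ⁅(t : L), w j t⁆) := by
          intro t
          show ⁅(LieSubmodule.Quotient.mk (t : L) : L ⧸ γ n),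
            (LieSubmodule.Quotient.mk (∑ j ∈ Finset.range (n + 1), w j t) : L ⧸ γ n)⁆ = _
          rw [← LieSubmodule.Quotient.mk_bracket, lmk_lie_sum]
          exact (lmk_sum _ _ _).symm
        rw [Finset.sum_congr rfl fun t _ => hcomp t]
        rw [← lmk_sum]
        rw [Finset.sum_comm]
        rw [Finset.sum_congr rfl fun j (_ : j ∈ Finset.range (n + 1)) => hw2 j]
        rw [hu_sum (n + 1)]
        exact hPtrans n
      exact hsum.symm
    rw [hxeq]
    rw [← LieSubmodule.mem_toSubmodule]
    refine Submodule.sum_mem _ fun t _ => ?_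
    rw [LieSubmodule.mem_toSubmodule, LieModule.lowerCentralSeries_succ]
    exact LieSubmodule.lie_mem_lie (LieSubmodule.mem_top _) (ih (W t) (hWk t))

end Aux3


/-- **Lemma 6.2.** For a finitely generated Lie algebra `𝔤` over `ℤ`, the canonical map
`η : 𝔤 → 𝔤̂` to the pronilpotent completion induces isomorphisms
`𝔤/γ_n(𝔤) ≅ 𝔤̂/γ_n(𝔤̂)` on all lower-central quotients (in particular on abelianizations). -/
theorem lie_lowerCentralQuotients_iso_completion
    (hfg : ∃ S : Finset L, LieSubalgebra.lieSpan ℤ L ↑S = ⊤) (k : ℕ) :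
    ∃ e : (L ⧸ LieModule.lowerCentralSeries ℤ L L k) ≃ₗ⁅ℤ⁆
        (↥(LiePronilpotentCompletion L) ⧸
          LieModule.lowerCentralSeries ℤ ↥(LiePronilpotentCompletion L)
            ↥(LiePronilpotentCompletion L) k),
      ∀ x : L,
        e (LieSubmodule.Quotient.mk x) =
          LieSubmodule.Quotient.mk (toLiePronilpotentCompletion L x) := by
  classical
  obtain ⟨S, hS⟩ := hfg
  set G := ↥(LiePronilpotentCompletion L)
  set N := LieModule.lowerCentralSeries ℤ L L k with hN
  set N' := LieModule.lowerCentralSeries ℤ G G k with hN'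
  have hφcond : N.toSubmodule ≤
      Submodule.comap (toLiePronilpotentCompletion L).toLinearMap N'.toSubmodule :=
    fun a ha => mem_lcs_map (toLiePronilpotentCompletion L) ha
  set φ : (L ⧸ N) →ₗ⁅ℤ⁆ (G ⧸ N') :=
    { toLinearMap := Submodule.mapQ N.toSubmodule N'.toSubmodule
        (toLiePronilpotentCompletion L).toLinearMap hφcond
      map_lie' := by rintro ⟨a⟩ ⟨b⟩; rfl } with hφ
  have hψcond : N'.toSubmodule ≤ LinearMap.ker (projLevel L k).toLinearMap := by
    intro y hy
    have h1 : projLevel L k y ∈ LieModule.lowerCentralSeries ℤ (L ⧸ N) (L ⧸ N) k :=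
      mem_lcs_map (projLevel L k) hy
    rw [lcs_quot_eq_bot L k] at h1
    simpa using h1
  set ψ : (G ⧸ N') →ₗ⁅ℤ⁆ (L ⧸ N) :=
    { toLinearMap := Submodule.liftQ N'.toSubmodule (projLevel L k).toLinearMap hψcond
      map_lie' := by rintro ⟨a⟩ ⟨b⟩; rfl } with hψ
  have hleft : Function.LeftInverse ψ φ := by
    intro q
    induction q using Quotient.inductionOn' with
    | h a => rfl
  have hright : Function.RightInverse ψ φ := by
    intro q
    induction q using Quotient.inductionOn' with
    | h x =>
      obtain ⟨g, hg⟩ := LieSubmodule.Quotient.surjective_mk' N ((x : ∀ n : ℕ, L ⧸ LieModule.lowerCentralSeries ℤ L L n) k)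
      replace hg : (LieSubmodule.Quotient.mk g : L ⧸ N)
          = (x : ∀ n : ℕ, L ⧸ LieModule.lowerCentralSeries ℤ L L n) k := hg
      have hdiff : toLiePronilpotentCompletion L g - x ∈ N' := by
        refine key_mem_lcs L S hS k _ ?_
        have : ((toLiePronilpotentCompletion L g - x : G) : ∀ n : ℕ, L ⧸ LieModule.lowerCentralSeries ℤ L L n) k
            = (LieSubmodule.Quotient.mk g : L ⧸ N) - (x : ∀ n : ℕ, L ⧸ LieModule.lowerCentralSeries ℤ L L n) k := rfl
        rw [this, hg, sub_self]
      have hq : (Quotient.mk'' x : G ⧸ N') = LieSubmodule.Quotient.mk x := rfl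
      have hφg : φ (LieSubmodule.Quotient.mk g)
          = (LieSubmodule.Quotient.mk (toLiePronilpotentCompletion L g) : G ⧸ N') := rfl
      have hψx : ψ (Quotient.mk'' x) = (LieSubmodule.Quotient.mk g : L ⧸ N) := by
        rw [hq]
        show (x : ∀ n : ℕ, L ⧸ LieModule.lowerCentralSeries ℤ L L n) k = _
        rw [hg]
      rw [hψx, hφg, hq]
      rw [← sub_eq_zero, ← lmk_sub]
      exact LieSubmodule.Quotient.mk_eq_zero'.mpr hdiff
  exact ⟨{ φ with invFun := ψ, left_inv := hleft, right_inv := hright }, fun x => rfl⟩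
end
end
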